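/- arXiv:1305.3006 — 4 statements merged into one kernel-verified Lean document; each statement's English description precedes it below -/
import Mathlib

section
/- For all real numbers a > 0 and r > 0, the mean of the logarithm under the Gamma distribution with shape a and rate r satisfies ∫_0^∞ (log x) · p_{a,r}(x) dx = ψ(a) − log r, where ψ(a) denotes the derivative at a of the function s ↦ log Γ(s). -/
open MeasureTheory Real Set Filter Topology Asymptotics

lemma mellinConv_log_exp {a : ℝ} (ha : 0 < a) :
    MellinConvergent (fun t : ℝ => Real.log t • ((Real.exp (-t) : ℝ) : ℂ)) (a : ℂ) := by
  have hs : 0 < (a : ℂ).re := by simpa using ha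
  refine (mellin_hasDerivAt_of_isBigO_rpow (E := ℂ) ?_ ?_ (lt_add_one _) ?_ hs).1
  · refine (Continuous.continuousOn ?_).locallyIntegrableOn measurableSet_Ioi
    exact Complex.continuous_ofReal.comp (Real.continuous_exp.comp continuous_neg)
  · rw [← isBigO_norm_left]
    simp_rw [Complex.norm_real, isBigO_norm_left]
    simpa only [neg_one_mul] using (isLittleO_exp_neg_mul_rpow_atTop zero_lt_one _).isBigO
  · simp_rw [neg_zero, Real.rpow_zero]
    refine isBigO_const_of_tendsto (?_ : Tendsto _ _ (𝓝 (1 : ℂ))) one_ne_zero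
    rw [(by simp : (1 : ℂ) = Real.exp (-0))]
    exact (Complex.continuous_ofReal.comp
      (Real.continuous_exp.comp continuous_neg)).continuousWithinAt

lemma integrableOn_log_gamma {a : ℝ} (ha : 0 < a) :
    IntegrableOn (fun t : ℝ => Real.log t * (t ^ (a - 1) * Real.exp (-t))) (Ioi 0) := by
  have h : IntegrableOn
      (fun t : ℝ => (t : ℂ) ^ ((a : ℂ) - 1) • (Real.log t • ((Real.exp (-t) : ℝ) : ℂ)))
      (Ioi 0) := mellinConv_log_exp ha
  refine IntegrableOn.congr_fun h.re (fun t ht => ?_) measurableSet_Ioi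
  have ht' : (0 : ℝ) < t := ht
  have he : ((a : ℂ) - 1) = ((a - 1 : ℝ) : ℂ) := by push_cast; ring
  simp only [he, ← Complex.ofReal_cpow ht'.le, smul_eq_mul, Complex.real_smul,
    ← Complex.ofReal_mul, Complex.ofReal_re, RCLike.re_to_complex]
  ring

lemma hasDerivAt_Gamma_int {a : ℝ} (ha : 0 < a) :
    HasDerivAt Real.Gamma
      (∫ t in Ioi (0 : ℝ), Real.log t * (t ^ (a - 1) * Real.exp (-t))) a := by
  have h := Complex.hasDerivAt_GammaIntegral (s := (a : ℂ)) (by simpa using ha)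
  have hD : (∫ t : ℝ in Ioi 0, (t : ℂ) ^ ((a : ℂ) - 1) * (Real.log t * Real.exp (-t)))
      = ((∫ t : ℝ in Ioi 0, Real.log t * (t ^ (a - 1) * Real.exp (-t)) : ℝ) : ℂ) := by
    have hcoe : ∀ y : ℝ, (y : ℂ) = @RCLike.ofReal ℂ _ y := fun _ => rfl
    conv_rhs => rw [hcoe, ← integral_ofReal]
    refine setIntegral_congr_fun measurableSet_Ioi fun t ht => ?_
    rw [← hcoe]
    have ht' : (0 : ℝ) < t := ht
    have he : ((a : ℂ) - 1) = ((a - 1 : ℝ) : ℂ) := by push_cast; ring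
    rw [he, ← Complex.ofReal_cpow ht'.le]
    push_cast
    ring
  rw [hD] at h
  have h2 := h.real_of_complex
  simp only [Complex.ofReal_re] at h2
  apply h2.congr_of_eventuallyEq
  filter_upwards [Ioi_mem_nhds ha] with x hx
  rw [← Complex.Gamma_eq_integral (by simpa using (mem_Ioi.mp hx)),
    Complex.Gamma_ofReal, Complex.ofReal_re]

/-- The Gamma probability density with shape `a` and rate `r`:
`p_{a,r}(x) = (r^a / Γ(a)) x^(a-1) e^(-r x)` for `x > 0`, and `0` for `x ≤ 0`. -/
noncomputable def gammaPdf (a r x : ℝ) : ℝ :=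
  if 0 < x then r ^ a / Real.Gamma a * x ^ (a - 1) * Real.exp (-(r * x)) else 0

/-- For all `a > 0`, `r > 0`, the mean of `log` under the Gamma distribution with shape
`a` and rate `r` is `ψ(a) - log r`, where `ψ(a)` is the derivative at `a` of
`s ↦ log Γ(s)` (the digamma function). -/
theorem gamma_log_mean (a r : ℝ) (ha : 0 < a) (hr : 0 < r) :
    (∫ x in Set.Ioi (0 : ℝ), Real.log x * gammaPdf a r x)
      = deriv (fun s : ℝ => Real.log (Real.Gamma s)) a - Real.log r := by
  have hΓ : 0 < Real.Gamma a := Real.Gamma_pos_of_pos ha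
  set I : ℝ := ∫ t in Ioi (0 : ℝ), Real.log t * (t ^ (a - 1) * Real.exp (-t)) with hI
  have hderiv : deriv (fun s : ℝ => Real.log (Real.Gamma s)) a = I / Real.Gamma a :=
    ((hasDerivAt_Gamma_int ha).log hΓ.ne').deriv
  rw [hderiv]
  set c : ℝ := r ^ a / Real.Gamma a with hc
  set F : ℝ → ℝ := fun t => Real.log t * (t ^ (a - 1) * Real.exp (-t)) with hF
  set G : ℝ → ℝ := fun t => t ^ (a - 1) * Real.exp (-t) with hG
  have hFint : IntegrableOn F (Ioi 0) := integrableOn_log_gamma ha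
  have hGint : IntegrableOn G (Ioi 0) :=
    (Real.GammaIntegral_convergent ha).congr_fun (fun t _ => by simp [hG, mul_comm])
      measurableSet_Ioi
  have hFc : IntegrableOn (fun x => F (r * x)) (Ioi 0) := by
    rw [integrableOn_Ioi_comp_mul_left_iff F 0 hr, mul_zero]
    exact hFint
  have hGc : IntegrableOn (fun x => G (r * x)) (Ioi 0) := by
    rw [integrableOn_Ioi_comp_mul_left_iff G 0 hr, mul_zero]
    exact hGint
  have hr1 : r ^ ((1 : ℝ) - a) * r ^ (a - 1) = 1 := by
    rw [← Real.rpow_add hr]; norm_num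
  have key : ∀ x ∈ Ioi (0 : ℝ), Real.log x * gammaPdf a r x
      = (c * r ^ ((1 : ℝ) - a)) * (F (r * x) - Real.log r * G (r * x)) := by
    intro x hx
    have hx' : (0 : ℝ) < x := hx
    simp only [gammaPdf, if_pos hx', hF, hG, hc]
    rw [Real.log_mul hr.ne' hx'.ne', Real.mul_rpow hr.le hx'.le]
    linear_combination (-(r ^ a / Real.Gamma a * Real.log x * x ^ (a - 1)
      * Real.exp (-(r * x)))) * hr1
  have hdefG : (∫ t in Ioi (0 : ℝ), G t) = Real.Gamma a := by
    rw [Real.Gamma_eq_integral ha]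
    exact setIntegral_congr_fun measurableSet_Ioi fun t _ => by simp [hG, mul_comm]
  calc (∫ x in Ioi (0 : ℝ), Real.log x * gammaPdf a r x)
      = ∫ x in Ioi (0 : ℝ), (c * r ^ ((1 : ℝ) - a)) * (F (r * x) - Real.log r * G (r * x)) :=
        setIntegral_congr_fun measurableSet_Ioi key
    _ = (c * r ^ ((1 : ℝ) - a)) * ((∫ x in Ioi (0 : ℝ), F (r * x))
          - Real.log r * ∫ x in Ioi (0 : ℝ), G (r * x)) := by
        rw [integral_const_mul, integral_sub hFc (hGc.const_mul _), integral_const_mul]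
    _ = (c * r ^ ((1 : ℝ) - a)) * (r⁻¹ * I - Real.log r * (r⁻¹ * Real.Gamma a)) := by
        rw [integral_comp_mul_left_Ioi F 0 hr, integral_comp_mul_left_Ioi G 0 hr, mul_zero,
          hdefG, smul_eq_mul, smul_eq_mul, hI]
    _ = I / Real.Gamma a - Real.log r := by
        have h1a : r ^ ((1 : ℝ) - a) = r / r ^ a := by
          rw [Real.rpow_sub hr, Real.rpow_one]
        have hra : (0 : ℝ) < r ^ a := Real.rpow_pos_of_pos hr a
        rw [hc, h1a]
        field_simp
end

section
/- Let E(M) = ∫_0^∞ (x − log x) · p_{M,M}(x) dx denote the expected value of η − log η when η is Gamma distributed with shape M and rate M. Then, as M → +∞, E(M) − (1 + 1/(2M) + 1/(12M²)) = O(1/M³); that is, the function M ↦ E(M) − (1 + 1/(2M) + 1/(12M²)) is big-O of M^{−3} along the filter at infinity on ℝ. -/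
/-- `E(M) = ∫_0^∞ (x - log x) p_{M,M}(x) dx`, the expectation of `η - log η` for
`η` Gamma-distributed with shape `M` and rate `M`. -/
noncomputable def gammaDiscrepancyMean (M : ℝ) : ℝ :=
  ∫ x in Set.Ioi (0 : ℝ), (x - Real.log x) * gammaPdf M M x

section Aux
set_option maxHeartbeats 1000000
open Real MeasureTheory Set Filter Topology


-- gamma integrand integrable
lemma gInt {a : ℝ} (ha : 0 < a) :
    IntegrableOn (fun t : ℝ => t ^ (a-1) * Real.exp (-t)) (Ioi 0) := by
  exact (Real.GammaIntegral_convergent ha).congr_fun (fun t ht => mul_comm _ _) measurableSet_Ioi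

lemma gIntEq {a : ℝ} (ha : 0 < a) :
    ∫ t in Ioi (0:ℝ), t ^ (a-1) * Real.exp (-t) = Real.Gamma a := by
  rw [Real.Gamma_eq_integral ha]
  exact setIntegral_congr_fun measurableSet_Ioi (fun t ht => mul_comm _ _)

-- log bound: for 0 < t ≤ 1, |log t| ≤ (2/a) * t^(-(a/2)) ;  for t ≥ 1, |log t| ≤ t
lemma log_le_rpow_div {ε t : ℝ} (hε : 0 < ε) (ht : 0 < t) : |Real.log t| ≤ ε⁻¹ * t ^ (-ε) + t := by
  rcases le_or_gt 1 t with h | h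
  · rw [abs_of_nonneg (Real.log_nonneg h)]
    have h2 : Real.log t ≤ t - 1 := Real.log_le_sub_one_of_pos ht
    nlinarith [Real.rpow_pos_of_pos ht (-ε), mul_pos (inv_pos.2 hε) (Real.rpow_pos_of_pos ht (-ε))]
  · rw [abs_of_nonpos (Real.log_nonpos ht.le h.le)]
    have h2 : Real.log (t ^ (-ε)) ≤ t ^ (-ε) - 1 := Real.log_le_sub_one_of_pos (Real.rpow_pos_of_pos ht _)
    rw [Real.log_rpow ht] at h2
    have key : -Real.log t ≤ ε⁻¹ * (t ^ (-ε) - 1) := by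
      calc -Real.log t = ε⁻¹ * (-ε * Real.log t) := by field_simp
        _ ≤ ε⁻¹ * (t ^ (-ε) - 1) := by
            apply mul_le_mul_of_nonneg_left (by linarith) (inv_pos.2 hε).le
    nlinarith [Real.rpow_pos_of_pos ht (-ε), inv_pos.2 hε]

lemma contOn (a : ℝ) : ContinuousOn (fun t : ℝ => t ^ (a-1) * Real.exp (-t) * Real.log t) (Ioi 0) := by
  intro t ht
  have ht' : (0:ℝ) < t := ht
  exact (((Real.continuousAt_rpow_const t _ (Or.inl ht'.ne')).mul
    ((Real.continuous_exp.comp continuous_neg).continuousAt)).mul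
    (Real.continuousAt_log ht'.ne')).continuousWithinAt

lemma logInt {a : ℝ} (ha : 0 < a) :
    IntegrableOn (fun t : ℝ => t ^ (a-1) * Real.exp (-t) * Real.log t) (Ioi 0) := by
  have hb : IntegrableOn (fun t : ℝ =>
      (a/2)⁻¹ * (t ^ (a/2-1) * Real.exp (-t)) + t ^ ((a+1)-1) * Real.exp (-t)) (Ioi 0) :=
    ((gInt (half_pos ha)).const_mul _).add (gInt (by linarith))
  refine Integrable.mono hb ((contOn a).aestronglyMeasurable measurableSet_Ioi) ?_
  rw [ae_restrict_iff' measurableSet_Ioi]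
  refine Filter.Eventually.of_forall (fun t ht => ?_)
  have ht' : (0:ℝ) < t := ht
  have h1 := log_le_rpow_div (half_pos ha) ht'
  have hrp : (0:ℝ) ≤ t ^ (a-1) := (Real.rpow_pos_of_pos ht' _).le
  have hrp2 : (0:ℝ) < t ^ (a/2-1) := Real.rpow_pos_of_pos ht' _
  have hrp3 : (0:ℝ) < t ^ ((a+1)-1) := Real.rpow_pos_of_pos ht' _
  have he : (0:ℝ) < Real.exp (-t) := Real.exp_pos _
  rw [Real.norm_eq_abs, Real.norm_eq_abs, abs_mul, abs_mul,
    abs_of_nonneg hrp, abs_of_nonneg he.le]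
  have key : t ^ (a-1) * Real.exp (-t) * |Real.log t|
      ≤ t ^ (a-1) * Real.exp (-t) * ((a/2)⁻¹ * t ^ (-(a/2)) + t) := by
    apply mul_le_mul_of_nonneg_left h1 (by positivity)
  refine key.trans (le_of_eq ?_)
  have e1 : t ^ (a-1) * t ^ (-(a/2)) = t ^ (a/2-1) := by
    rw [← Real.rpow_add ht']; ring_nf
  have e2 : t ^ (a-1) * t = t ^ ((a+1)-1) := by
    rw [show (a+1)-1 = (a-1) + 1 by ring, Real.rpow_add_one ht'.ne']
  rw [abs_of_nonneg (by positivity)]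
  calc t ^ (a-1) * Real.exp (-t) * ((a/2)⁻¹ * t ^ (-(a/2)) + t)
      = (a/2)⁻¹ * ((t ^ (a-1) * t ^ (-(a/2))) * Real.exp (-t)) + (t ^ (a-1) * t) * Real.exp (-t) := by ring
    _ = (a/2)⁻¹ * (t ^ (a/2-1) * Real.exp (-t)) + t ^ ((a+1)-1) * Real.exp (-t) := by rw [e1, e2]

noncomputable def Lg (a : ℝ) : ℝ := ∫ t in Ioi (0:ℝ), t ^ (a-1) * Real.exp (-t) * Real.log t

lemma Lg_rec {a : ℝ} (ha : 0 < a) : Lg (a+1) = a * Lg a + Real.Gamma a := by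
  set F : ℝ → ℝ := fun t => t ^ a * Real.log t * Real.exp (-t) with hF
  set f' : ℝ → ℝ := fun x => a * (x ^ (a-1) * Real.exp (-x) * Real.log x)
      + x ^ (a-1) * Real.exp (-x) - x ^ ((a+1)-1) * Real.exp (-x) * Real.log x with hf'
  have f'int : IntegrableOn f' (Ioi 0) :=
    (((logInt ha).const_mul a).add (gInt ha)).sub (logInt (by linarith))
  have hcont : ContinuousWithinAt F (Ici 0) 0 := by
    rw [← continuousWithinAt_Ioi_iff_Ici]
    have hF0 : F 0 = 0 := by simp [hF, Real.log_zero]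
    unfold ContinuousWithinAt
    rw [hF0]
    have h1 : Tendsto (fun t : ℝ => Real.log t * t ^ a) (𝓝[>] 0) (𝓝 0) :=
      tendsto_log_mul_rpow_nhdsGT_zero ha
    have h2 : Tendsto (fun t : ℝ => Real.exp (-t)) (𝓝[>] (0:ℝ)) (𝓝 1) := by
      have h3 : Tendsto (fun t : ℝ => Real.exp (-t)) (𝓝 (0:ℝ)) (𝓝 (Real.exp (-0))) :=
        (Real.continuous_exp.comp continuous_neg).tendsto 0
      rw [neg_zero, Real.exp_zero] at h3
      exact h3.mono_left (nhdsWithin_le_nhds (s := Ioi (0:ℝ)))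
    have := h1.mul h2
    rw [mul_one] at this
    refine this.congr (fun t => by ring)
  have hderiv : ∀ x ∈ Ioi (0:ℝ), HasDerivAt F (f' x) x := by
    intro x hx
    have hx' : (0:ℝ) < x := hx
    have h1 : HasDerivAt (fun t : ℝ => t ^ a) (a * x ^ (a-1)) x :=
      Real.hasDerivAt_rpow_const (Or.inl hx'.ne')
    have h2 : HasDerivAt Real.log x⁻¹ x := Real.hasDerivAt_log hx'.ne'
    have h3 : HasDerivAt (fun t : ℝ => Real.exp (-t)) (Real.exp (-x) * (-1)) x :=
      (hasDerivAt_neg x).exp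
    have hd := (h1.mul h2).mul h3
    refine hd.congr_deriv ?_
    have e1 : x ^ (a-1) = x ^ a / x := by rw [Real.rpow_sub hx', Real.rpow_one]
    have e2 : x ^ ((a+1)-1) = x ^ a := by norm_num
    simp only [hf', Pi.mul_apply]
    rw [e1, e2]
    field_simp
    ring
  have hf : Tendsto F atTop (𝓝 0) := by
    refine squeeze_zero_norm' (a := fun t => t ^ (a+1) * Real.exp (-1*t)) ?_
      (tendsto_rpow_mul_exp_neg_mul_atTop_nhds_zero (a+1) 1 one_pos)
    · filter_upwards [eventually_ge_atTop (1:ℝ)] with t ht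
      have ht' : (0:ℝ) < t := by linarith
      have hl0 : 0 ≤ Real.log t := Real.log_nonneg ht
      have hlt : Real.log t ≤ t := (Real.log_le_sub_one_of_pos ht').trans (by linarith)
      rw [Real.norm_eq_abs, abs_of_nonneg (by positivity)]
      rw [show (-1:ℝ)*t = -t by ring]
      have : t ^ a * Real.log t ≤ t ^ (a+1) := by
        calc t ^ a * Real.log t ≤ t ^ a * t := by
              exact mul_le_mul_of_nonneg_left hlt (by positivity)
          _ = t ^ (a+1) := (Real.rpow_add_one ht'.ne' a).symm
      exact mul_le_mul_of_nonneg_right this (Real.exp_pos _).le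
  have key := integral_Ioi_of_hasDerivAt_of_tendsto hcont hderiv f'int hf
  have hF0 : F 0 = 0 := by
    simp [hF, Real.log_zero]
  rw [hF0, sub_zero] at key
  have split : ∫ x in Ioi (0:ℝ), f' x
      = a * Lg a + Real.Gamma a - Lg (a+1) := by
    have i1 : IntegrableOn (fun x : ℝ =>
        a * (x ^ (a-1) * Real.exp (-x) * Real.log x) + x ^ (a-1) * Real.exp (-x)) (Ioi 0) :=
      ((logInt ha).const_mul a).add (gInt ha)
    have i2 : IntegrableOn (fun x : ℝ => x ^ ((a+1)-1) * Real.exp (-x) * Real.log x) (Ioi 0) :=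
      logInt (a := a+1) (by linarith)
    have i3 : IntegrableOn (fun x : ℝ =>
        a * (x ^ (a-1) * Real.exp (-x) * Real.log x)) (Ioi 0) := (logInt ha).const_mul a
    simp only [hf']
    rw [integral_sub i1 i2, integral_add i3 (gInt ha), MeasureTheory.integral_const_mul, gIntEq ha]
    rfl
  rw [split] at key
  linarith

lemma Lg_upper {a : ℝ} (ha : 0 < a) : Lg a ≤ Real.log a * Real.Gamma a := by
  have hint : IntegrableOn (fun t : ℝ =>
      (Real.log a - 1) * (t ^ (a-1) * Real.exp (-t)) + a⁻¹ * (t ^ ((a+1)-1) * Real.exp (-t)))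
      (Ioi 0) := ((gInt ha).const_mul _).add ((gInt (by linarith)).const_mul _)
  have hmono : Lg a ≤ ∫ t in Ioi (0:ℝ),
      ((Real.log a - 1) * (t ^ (a-1) * Real.exp (-t)) + a⁻¹ * (t ^ ((a+1)-1) * Real.exp (-t))) := by
    apply setIntegral_mono_on (logInt ha) hint measurableSet_Ioi
    intro t ht
    have ht' : (0:ℝ) < t := ht
    have hlog : Real.log t ≤ Real.log a + t/a - 1 := by
      have := Real.log_le_sub_one_of_pos (div_pos ht' ha)
      rw [Real.log_div ht'.ne' ha.ne'] at this
      linarith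
    have hw : (0:ℝ) < t ^ (a-1) * Real.exp (-t) := by positivity
    have e2 : t ^ ((a+1)-1) = t ^ (a-1) * t := by
      rw [show (a+1)-1 = (a-1) + 1 by ring, Real.rpow_add_one ht'.ne']
    rw [e2]
    have expand : (Real.log a - 1) * (t ^ (a-1) * Real.exp (-t))
        + a⁻¹ * (t ^ (a-1) * t * Real.exp (-t))
        = (t ^ (a-1) * Real.exp (-t)) * (Real.log a + t/a - 1) := by
      field_simp
      ring
    rw [expand]
    calc t ^ (a-1) * Real.exp (-t) * Real.log t
        ≤ t ^ (a-1) * Real.exp (-t) * (Real.log a + t/a - 1) :=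
          mul_le_mul_of_nonneg_left hlog hw.le
      _ = _ := rfl
  have hval : ∫ t in Ioi (0:ℝ),
      ((Real.log a - 1) * (t ^ (a-1) * Real.exp (-t)) + a⁻¹ * (t ^ ((a+1)-1) * Real.exp (-t)))
      = Real.log a * Real.Gamma a := by
    rw [integral_add ((gInt ha).const_mul _) ((gInt (by linarith : (0:ℝ) < a+1)).const_mul _),
      MeasureTheory.integral_const_mul, MeasureTheory.integral_const_mul, gIntEq ha,
      gIntEq (by linarith : (0:ℝ) < a+1), Real.Gamma_add_one ha.ne']
    field_simp
    ring
  linarith [hmono, hval.le, hval.ge]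

lemma Lg_lower {a : ℝ} (ha : 1 < a) : Real.log (a-1) * Real.Gamma a ≤ Lg a := by
  have ha0 : (0:ℝ) < a := by linarith
  have ha1 : (0:ℝ) < a - 1 := by linarith
  have hint : IntegrableOn (fun t : ℝ =>
      (Real.log (a-1) + 1) * (t ^ (a-1) * Real.exp (-t)) - (a-1) * (t ^ ((a-1)-1) * Real.exp (-t)))
      (Ioi 0) := (((gInt ha0).const_mul _)).sub ((gInt ha1).const_mul _)
  have hmono : (∫ t in Ioi (0:ℝ),
      ((Real.log (a-1) + 1) * (t ^ (a-1) * Real.exp (-t)) - (a-1) * (t ^ ((a-1)-1) * Real.exp (-t))))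
      ≤ Lg a := by
    apply setIntegral_mono_on hint (logInt ha0) measurableSet_Ioi
    intro t ht
    have ht' : (0:ℝ) < t := ht
    have hlog : Real.log (a-1) + 1 - (a-1)/t ≤ Real.log t := by
      have := Real.log_le_sub_one_of_pos (div_pos ha1 ht')
      rw [Real.log_div ha1.ne' ht'.ne'] at this
      linarith
    have hw : (0:ℝ) < t ^ (a-1) * Real.exp (-t) := by positivity
    have e2 : t ^ ((a-1)-1) = t ^ (a-1) / t := by
      rw [show (a-1)-1 = (a-1) - 1 by ring, Real.rpow_sub ht', Real.rpow_one]
    rw [e2]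
    have expand : (Real.log (a-1) + 1) * (t ^ (a-1) * Real.exp (-t))
        - (a-1) * (t ^ (a-1) / t * Real.exp (-t))
        = (t ^ (a-1) * Real.exp (-t)) * (Real.log (a-1) + 1 - (a-1)/t) := by
      field_simp
    rw [expand]
    exact mul_le_mul_of_nonneg_left hlog hw.le
  have hgam : Real.Gamma a = (a-1) * Real.Gamma (a-1) := by
    have := Real.Gamma_add_one ha1.ne'
    rw [sub_add_cancel] at this
    exact this
  have hval : (∫ t in Ioi (0:ℝ),
      ((Real.log (a-1) + 1) * (t ^ (a-1) * Real.exp (-t)) - (a-1) * (t ^ ((a-1)-1) * Real.exp (-t))))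
      = Real.log (a-1) * Real.Gamma a := by
    rw [integral_sub (((gInt ha0)).const_mul _) ((gInt ha1).const_mul _),
      MeasureTheory.integral_const_mul, MeasureTheory.integral_const_mul, gIntEq ha0, gIntEq ha1,
      hgam]
    ring
  linarith [hmono, hval.le, hval.ge]

noncomputable def Dg (a : ℝ) : ℝ := Real.log a - Lg a / Real.Gamma a

lemma Dg_nonneg {a : ℝ} (ha : 0 < a) : 0 ≤ Dg a := by
  have hg := Real.Gamma_pos_of_pos ha
  have := Lg_upper ha
  rw [Dg, sub_nonneg, div_le_iff₀ hg]
  linarith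

lemma Dg_le {a : ℝ} (ha : 1 < a) : Dg a ≤ 1 / (a-1) := by
  have ha0 : (0:ℝ) < a := by linarith
  have ha1 : (0:ℝ) < a - 1 := by linarith
  have hg := Real.Gamma_pos_of_pos ha0
  have h1 : Real.log (a-1) ≤ Lg a / Real.Gamma a := by
    rw [le_div_iff₀ hg]; exact Lg_lower ha
  have h2 : Real.log a - Real.log (a-1) ≤ 1/(a-1) := by
    have h3 := Real.log_le_sub_one_of_pos (div_pos ha0 ha1)
    rw [Real.log_div ha0.ne' ha1.ne'] at h3
    have : a / (a-1) - 1 = 1/(a-1) := by field_simp; ring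
    linarith
  rw [Dg]
  linarith

lemma Dg_rec {a : ℝ} (ha : 0 < a) : Dg a - Dg (a+1) = 1/a - Real.log (1 + 1/a) := by
  have hg := Real.Gamma_pos_of_pos ha
  have hrec : Lg (a+1) / Real.Gamma (a+1) = Lg a / Real.Gamma a + 1/a := by
    rw [Lg_rec ha, Real.Gamma_add_one ha.ne']
    field_simp
  have hlog : Real.log (a+1) - Real.log a = Real.log (1 + 1/a) := by
    rw [show (1:ℝ) + 1/a = (a+1)/a by field_simp, Real.log_div (by linarith) ha.ne']
  rw [Dg, Dg, hrec]
  linarith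

lemma contOn2 (a r : ℝ) : ContinuousOn (fun t : ℝ => t ^ (a-1) * Real.exp (-(r*t))) (Ioi 0) := by
  intro t ht
  have ht' : (0:ℝ) < t := ht
  exact ((Real.continuousAt_rpow_const t _ (Or.inl ht'.ne')).mul
    ((Real.continuous_exp.comp (continuous_const.mul continuous_id).neg).continuousAt)).continuousWithinAt

lemma intA {a r : ℝ} (ha : 0 < a) (hr : 1 ≤ r) :
    IntegrableOn (fun x : ℝ => x ^ (a-1) * Real.exp (-(r*x))) (Ioi 0) := by
  refine Integrable.mono (gInt ha) ((contOn2 a r).aestronglyMeasurable measurableSet_Ioi) ?_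
  rw [ae_restrict_iff' measurableSet_Ioi]
  refine Filter.Eventually.of_forall (fun x hx => ?_)
  have hx' : (0:ℝ) < x := hx
  have he : Real.exp (-(r*x)) ≤ Real.exp (-x) := by
    apply Real.exp_le_exp.2
    nlinarith
  rw [Real.norm_eq_abs, Real.norm_eq_abs, abs_of_nonneg (by positivity),
    abs_of_nonneg (by positivity)]
  exact mul_le_mul_of_nonneg_left he (by positivity)

lemma intC {a r : ℝ} (ha : 0 < a) (hr : 1 ≤ r) :
    IntegrableOn (fun x : ℝ => x ^ (a-1) * Real.exp (-(r*x)) * Real.log x) (Ioi 0) := by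
  have hcont : ContinuousOn (fun x : ℝ => x ^ (a-1) * Real.exp (-(r*x)) * Real.log x) (Ioi 0) := by
    intro t ht
    have ht' : (0:ℝ) < t := ht
    exact ((contOn2 a r t ht).mul ((Real.continuousAt_log ht'.ne').continuousWithinAt))
  refine Integrable.mono (logInt ha) (hcont.aestronglyMeasurable measurableSet_Ioi) ?_
  rw [ae_restrict_iff' measurableSet_Ioi]
  refine Filter.Eventually.of_forall (fun x hx => ?_)
  have hx' : (0:ℝ) < x := hx
  have he : Real.exp (-(r*x)) ≤ Real.exp (-x) := by
    apply Real.exp_le_exp.2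
    nlinarith
  rw [Real.norm_eq_abs, Real.norm_eq_abs, abs_mul, abs_mul, abs_mul, abs_mul,
    abs_of_nonneg (Real.rpow_pos_of_pos hx' (a-1)).le, abs_of_nonneg (Real.exp_pos _).le,
    abs_of_nonneg (Real.exp_pos _).le]
  have h1 : x ^ (a-1) * Real.exp (-(r*x)) ≤ x ^ (a-1) * Real.exp (-x) :=
    mul_le_mul_of_nonneg_left he (by positivity)
  exact mul_le_mul_of_nonneg_right h1 (abs_nonneg _)

lemma mean_eq {M : ℝ} (hM : 2 ≤ M) : gammaDiscrepancyMean M = 1 + Dg M := by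
  have hM0 : (0:ℝ) < M := by linarith
  have hM1 : (1:ℝ) ≤ M := by linarith
  have hg : 0 < Real.Gamma M := Real.Gamma_pos_of_pos hM0
  have hP : (0:ℝ) < M ^ M := Real.rpow_pos_of_pos hM0 M
  set c : ℝ := M ^ M / Real.Gamma M with hc
  set G : ℝ := Real.Gamma M with hG
  set P : ℝ := M ^ M with hPdef
  set J : ℝ := ∫ x in Ioi (0:ℝ), x ^ (M-1) * Real.exp (-(M*x)) * Real.log x with hJ
  have e1 : M ^ (M-1) = P / M := by rw [hPdef, Real.rpow_sub hM0, Real.rpow_one]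
  have e2 : (1/M) ^ M = P⁻¹ := by rw [one_div, Real.inv_rpow hM0.le]
  have e3 : (1/M) ^ (M+1) = (P * M)⁻¹ := by
    rw [one_div, Real.inv_rpow hM0.le, Real.rpow_add_one hM0.ne']
  -- substitution identity
  have sub := MeasureTheory.integral_comp_mul_left_Ioi
    (fun t : ℝ => t ^ (M-1) * Real.exp (-t) * Real.log t) 0 hM0
  rw [mul_zero, smul_eq_mul] at sub
  have congrL : ∫ x in Ioi (0:ℝ), (M*x) ^ (M-1) * Real.exp (-(M*x)) * Real.log (M*x)
      = (∫ x in Ioi (0:ℝ), M ^ (M-1) * (x ^ (M-1) * Real.exp (-(M*x)) * Real.log x))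
        + ∫ x in Ioi (0:ℝ), (M ^ (M-1) * Real.log M) * (x ^ (M-1) * Real.exp (-(M*x))) := by
    rw [← integral_add ((intC hM0 hM1).const_mul _) ((intA hM0 hM1).const_mul _)]
    apply setIntegral_congr_fun measurableSet_Ioi
    intro x hx
    have hx' : (0:ℝ) < x := hx
    show (M*x) ^ (M-1) * Real.exp (-(M*x)) * Real.log (M*x) = _
    rw [Real.mul_rpow hM0.le hx'.le, Real.log_mul hM0.ne' hx'.ne']
    ring
  have subval : M ^ (M-1) * J + M ^ (M-1) * Real.log M * ((1/M) ^ M * G) = M⁻¹ * Lg M := by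
    have vA : ∫ x in Ioi (0:ℝ), x ^ (M-1) * Real.exp (-(M*x)) = (1/M) ^ M * G :=
      Real.integral_rpow_mul_exp_neg_mul_Ioi hM0 hM0
    have lhs_eq : ∫ x in Ioi (0:ℝ), (M*x) ^ (M-1) * Real.exp (-(M*x)) * Real.log (M*x)
        = M ^ (M-1) * J + M ^ (M-1) * Real.log M * ((1/M) ^ M * G) := by
      rw [congrL, MeasureTheory.integral_const_mul, MeasureTheory.integral_const_mul, vA, ← hJ]
      try ring
    rw [← lhs_eq]
    try exact sub
  -- the main integral
  have congr1 : gammaDiscrepancyMean M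
      = (∫ x in Ioi (0:ℝ), c * (x ^ ((M+1)-1) * Real.exp (-(M*x))))
        - ∫ x in Ioi (0:ℝ), c * (x ^ (M-1) * Real.exp (-(M*x)) * Real.log x) := by
    rw [gammaDiscrepancyMean,
      ← integral_sub ((intA (by linarith : (0:ℝ) < M+1) hM1).const_mul _)
        ((intC hM0 hM1).const_mul _)]
    apply setIntegral_congr_fun measurableSet_Ioi
    intro x hx
    have hx' : (0:ℝ) < x := hx
    show (x - Real.log x) * gammaPdf M M x
      = c * (x ^ ((M+1)-1) * Real.exp (-(M*x))) - c * (x ^ (M-1) * Real.exp (-(M*x)) * Real.log x)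
    rw [show gammaPdf M M x = M ^ M / Real.Gamma M * x ^ (M - 1) * Real.exp (-(M * x)) from if_pos hx']
    have e : x ^ ((M+1)-1) = x * x ^ (M-1) := by
      rw [show (M+1)-1 = (M-1)+1 by ring, Real.rpow_add_one hx'.ne']; ring
    rw [e]
    ring
  have vB : ∫ x in Ioi (0:ℝ), x ^ ((M+1)-1) * Real.exp (-(M*x)) = (1/M) ^ (M+1) * Real.Gamma (M+1) :=
    Real.integral_rpow_mul_exp_neg_mul_Ioi (by linarith) hM0
  rw [congr1, MeasureTheory.integral_const_mul, MeasureTheory.integral_const_mul, vB, ← hJ,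
    Real.Gamma_add_one hM0.ne', e3, Dg]
  rw [e1, e2] at subval
  have hJval : J = (Lg M - Real.log M * G) / P := by
    field_simp at subval
    have hcancel : (P * J + Real.log M * G) * (P * M^2) = Lg M * (P * M^2) := by
      linear_combination (P * M^2) * subval
    have h2 : P * J + Real.log M * G = Lg M := mul_right_cancel₀ (by positivity) hcancel
    rw [eq_div_iff hP.ne']
    linarith
  rw [hJval, hc, ← hG]
  field_simp
  ring

noncomputable def hfun (x : ℝ) : ℝ :=
  (1/x - Real.log (1 + 1/x)) - 1/(2*x*(x+1)) - (2*x+1)/(12*x^2*(x+1)^2)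

noncomputable def Phi (a : ℝ) : ℝ := Dg a - 1/(2*a) - 1/(12*a^2)

lemma Phi_rec {a : ℝ} (ha : 0 < a) : Phi a - Phi (a+1) = hfun a := by
  have h := Dg_rec ha
  have ha1 : (0:ℝ) < a + 1 := by linarith
  have hrat : 1/(2*a) - 1/(2*(a+1)) = 1/(2*a*(a+1)) := by
    field_simp
    ring
  have hrat2 : 1/(12*a^2) - 1/(12*(a+1)^2) = (2*a+1)/(12*a^2*(a+1)^2) := by
    field_simp
    ring
  rw [Phi, Phi, hfun]
  linarith

lemma hfun_bound {x : ℝ} (hx : 2 ≤ x) : |hfun x| ≤ 3/x^4 := by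
  have hx0 : (0:ℝ) < x := by linarith
  set u : ℝ := 1/x with hu
  have hu0 : 0 < u := by positivity
  have hu2 : u ≤ 1/2 := by rw [hu]; rw [div_le_div_iff₀ hx0 two_pos]; linarith
  have key := Real.abs_log_sub_add_sum_range_le (x := -u) (by rw [abs_neg, abs_of_pos hu0]; linarith) 3
  have hsum : (∑ i ∈ Finset.range 3, (-u) ^ (i + 1) / (i + 1)) = -u + u^2/2 - u^3/3 := by
    simp [Finset.sum_range_succ]
    ring
  rw [hsum, sub_neg_eq_add, abs_neg, abs_of_pos hu0] at key
  have h1 : |(-u + u^2/2 - u^3/3) + Real.log (1+u)| ≤ 2*u^4 := by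
    refine key.trans ?_
    rw [show (3:ℕ)+1 = 4 from rfl, div_le_iff₀ (by linarith)]
    have hq : (0:ℝ) ≤ 1 - 2*u := by linarith
    nlinarith [mul_nonneg (pow_nonneg hu0.le 4) hq]
  have hA : u^2/2 - u^3/3 - (1/(2*x*(x+1)) + (2*x+1)/(12*x^2*(x+1)^2))
      = -((3*x+4)/(12*x^3*(x+1)^2)) := by
    rw [hu]
    field_simp
    ring
  have h2 : |u^2/2 - u^3/3 - (1/(2*x*(x+1)) + (2*x+1)/(12*x^2*(x+1)^2))| ≤ 1/x^4 := by
    rw [hA, abs_neg, abs_of_pos (by positivity), div_le_div_iff₀ (by positivity) (by positivity)]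
    nlinarith [pow_nonneg hx0.le 3, pow_nonneg hx0.le 4, pow_nonneg hx0.le 5]
  have hdecomp : hfun x = -((-u + u^2/2 - u^3/3) + Real.log (1+u))
      + (u^2/2 - u^3/3 - (1/(2*x*(x+1)) + (2*x+1)/(12*x^2*(x+1)^2))) := by
    rw [hfun, hu]
    ring
  have hu4 : u^4 = 1/x^4 := by rw [hu]; field_simp
  calc |hfun x| ≤ |(-u + u^2/2 - u^3/3) + Real.log (1+u)|
        + |u^2/2 - u^3/3 - (1/(2*x*(x+1)) + (2*x+1)/(12*x^2*(x+1)^2))| := by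
        rw [hdecomp]
        exact (abs_add_le _ _).trans (by rw [abs_neg])
    _ ≤ 2*u^4 + 1/x^4 := add_le_add h1 h2
    _ = 3/x^4 := by rw [hu4]; ring

lemma Phi_telescope {a : ℝ} (ha : 2 ≤ a) (n : ℕ) :
    Phi a - Phi (a + n) = ∑ k ∈ Finset.range n, hfun (a + k) := by
  induction n with
  | zero => simp
  | succ n ih =>
    rw [Finset.sum_range_succ, ← ih]
    have e : a + ((n:ℝ) + 1) = (a + n) + 1 := by ring
    have := Phi_rec (a := a + n) (by positivity)
    push_cast
    rw [e]
    linarith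

lemma sum_bound {a : ℝ} (ha : 2 ≤ a) (n : ℕ) :
    |∑ k ∈ Finset.range n, hfun (a + k)| ≤ 8/a^3 := by
  have ha0 : (0:ℝ) < a := by linarith
  calc |∑ k ∈ Finset.range n, hfun (a + k)| ≤ ∑ k ∈ Finset.range n, |hfun (a + k)| :=
        Finset.abs_sum_le_sum_abs _ _
    _ ≤ ∑ k ∈ Finset.range n, (1/(a + k - 1)^3 - 1/(a + (k+1:ℕ) - 1)^3) := by
        apply Finset.sum_le_sum
        intro k _
        have hk : (0:ℝ) ≤ (k:ℝ) := Nat.cast_nonneg k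
        have hy : (2:ℝ) ≤ a + k := by linarith
        have hy0 : (0:ℝ) < a + k := by linarith
        have hy1 : (1:ℝ) ≤ a + k - 1 := by linarith
        refine (hfun_bound hy).trans ?_
        push_cast
        have e : a + ((k:ℝ)+1) - 1 = a + k := by ring
        rw [e]
        rw [div_sub_div _ _ (by positivity) (by positivity), div_le_div_iff₀ (by positivity) (by positivity)]
        have hq : (0:ℝ) ≤ 6*(a+(k:ℝ))^2 - 8*(a+(k:ℝ)) + 3 := by nlinarith [sq_nonneg (a+(k:ℝ)-1)]
        nlinarith [mul_nonneg (pow_nonneg hy0.le 3) hq]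
    _ = 1/(a + (0:ℕ) - 1)^3 - 1/(a + (n:ℕ) - 1)^3 :=
        Finset.sum_range_sub' (fun k : ℕ => 1/(a + k - 1)^3) n
    _ ≤ 8/a^3 := by
        push_cast
        have hn0 : (0:ℝ) ≤ (n:ℝ) := Nat.cast_nonneg n
        have hd : (0:ℝ) < a + n - 1 := by linarith
        have h1 : (0:ℝ) < (a + n - 1)^3 := pow_pos hd 3
        have h2 : 1/(a + (n:ℝ) - 1)^3 ≥ 0 := le_of_lt (div_pos one_pos h1)
        have ha1 : (0:ℝ) < a - 1 := by linarith
        have h3 : 1/(a - 1)^3 ≤ 8/a^3 := by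
          rw [div_le_div_iff₀ (pow_pos ha1 3) (by positivity)]
          have hA2 : (0:ℝ) ≤ a - 2 := by linarith
          have hB : (0:ℝ) ≤ 7*a^2 - 10*a + 4 := by nlinarith [sq_nonneg (a-1)]
          nlinarith [mul_nonneg hA2 hB]
        simp only [add_zero]
        linarith

lemma Phi_bound {a : ℝ} (ha : 2 ≤ a) : |Phi a| ≤ 8/a^3 := by
  have ha0 : (0:ℝ) < a := by linarith
  have key : ∀ n : ℕ, 1 ≤ n → |Phi a| ≤ 8/a^3 + 3/n := by
    intro n hn
    have hn' : (1:ℝ) ≤ (n:ℝ) := by exact_mod_cast hn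
    have hphi : Phi a = (∑ k ∈ Finset.range n, hfun (a + k)) + Phi (a + n) := by
      have := Phi_telescope ha n
      linarith
    have htail : |Phi (a + n)| ≤ 3/n := by
      have hy : (2:ℝ) ≤ a + n := by linarith
      have hy1 : (1:ℝ) < a + n := by linarith
      have hD0 := Dg_nonneg (a := a + n) (by linarith)
      have hD1 := Dg_le hy1
      have hb1 : 1/(a + (n:ℝ) - 1) ≤ 1/n := by
        apply div_le_div_of_nonneg_left one_pos.le (by linarith) (by linarith)
      have hb2 : 1/(2*(a + (n:ℝ))) ≤ 1/n := by
        apply div_le_div_of_nonneg_left one_pos.le (by linarith) (by linarith)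
      have hb3 : 1/(12*(a + (n:ℝ))^2) ≤ 1/n := by
        apply div_le_div_of_nonneg_left one_pos.le (by linarith) (by nlinarith)
      have hpos2 : 0 < 2*(a + (n:ℝ)) := by linarith
      have hpos3 : 0 < 12*(a + (n:ℝ))^2 := by positivity
      rw [Phi, abs_le]
      constructor
      · have : (0:ℝ) ≤ Dg (a + n) := hD0
        have t2 : 1/(2*(a + (n:ℝ))) ≥ 0 := by positivity
        have t3 : 1/(12*(a + (n:ℝ))^2) ≥ 0 := by positivity
        have : 3/(n:ℝ) = 1/n + 1/n + 1/n := by ring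
        rw [this]
        linarith
      · have t2 : 1/(2*(a + (n:ℝ))) ≥ 0 := by positivity
        have t3 : 1/(12*(a + (n:ℝ))^2) ≥ 0 := by positivity
        have h3n : (0:ℝ) < 3/n := by positivity
        have : Dg (a + n) ≤ 1/(a + (n:ℝ) - 1) := hD1
        have : Dg (a + n) ≤ 3/(n:ℝ) := by
          refine this.trans (hb1.trans ?_)
          rw [div_le_div_iff₀ (by linarith) (by linarith)]
          linarith
        linarith
    calc |Phi a| ≤ |∑ k ∈ Finset.range n, hfun (a + k)| + |Phi (a + n)| := by
          rw [hphi]; exact abs_add_le _ _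
      _ ≤ 8/a^3 + 3/n := add_le_add (sum_bound ha n) htail
  have hlim : Tendsto (fun n : ℕ => 8/a^3 + 3/(n:ℝ)) atTop (𝓝 (8/a^3 + 3*0)) := by
    apply Tendsto.add tendsto_const_nhds
    have := tendsto_one_div_atTop_nhds_zero_nat.const_mul (3:ℝ)
    refine this.congr (fun n => ?_)
    ring
  rw [mul_zero, add_zero] at hlim
  refine ge_of_tendsto hlim ?_
  filter_upwards [eventually_ge_atTop 1] with n hn
  exact key n hn

end Aux

section Main
set_option maxHeartbeats 1000000
open Real MeasureTheory Set Filter Topology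

/-- As `M → +∞`, `E(M) - (1 + 1/(2M) + 1/(12M²)) = O(1/M³)`. -/
theorem gamma_discrepancy_mean_asymptotic :
    (fun M : ℝ => gammaDiscrepancyMean M - (1 + 1 / (2 * M) + 1 / (12 * M ^ 2)))
      =O[Filter.atTop] fun M : ℝ => 1 / M ^ 3 := by
  rw [Asymptotics.isBigO_iff]
  refine ⟨8, ?_⟩
  filter_upwards [Filter.eventually_ge_atTop (2:ℝ)] with M hM
  have hM0 : (0:ℝ) < M := by linarith
  rw [mean_eq hM]
  have e : 1 + Dg M - (1 + 1/(2*M) + 1/(12*M^2)) = Phi M := by rw [Phi]; ring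
  rw [e]
  have hb := Phi_bound hM
  rw [Real.norm_eq_abs, Real.norm_eq_abs, abs_of_pos (by positivity : (0:ℝ) < 1/M^3)]
  calc |Phi M| ≤ 8/M^3 := hb
    _ = 8 * (1/M^3) := by ring

end Main
end

section
/- Let m, n be positive integers, let A₁, A₂, f ∈ ℝ^{m×n} with f_{i,j} > 0 for all i, j, and suppose Σ_{i,j} (A₁)_{i,j} ≠ 0. Define the discrepancy function K : ℝ → ℝ by K(τ) = (1/(mn)) Σ_{i,j} ( (A₁)_{i,j} τ + (A₂)_{i,j} + f_{i,j} · e^{−((A₁)_{i,j} τ + (A₂)_{i,j})} − log f_{i,j} ) − C̄. If C̄ ≥ (1/(mn)) Σ_{i,j} ( (A₂)_{i,j} + f_{i,j} · e^{−(A₂)_{i,j}} − log f_{i,j} ), then the equation K(τ) = 0 has at least one real solution. -/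
open Finset

/-- The discrepancy function
`K(τ) = (1/(mn)) Σ_{i,j} ((A₁)_{ij} τ + (A₂)_{ij} + f_{ij} e^{-((A₁)_{ij} τ + (A₂)_{ij})} - log f_{ij}) - C̄`. -/
noncomputable def discrepK (m n : ℕ) (A1 A2 f : Fin m → Fin n → ℝ) (C : ℝ) (τ : ℝ) : ℝ :=
  (1 / ((m : ℝ) * n)) *
      ∑ i, ∑ j,
        (A1 i j * τ + A2 i j + f i j * Real.exp (-(A1 i j * τ + A2 i j)) - Real.log (f i j))
    - C

/-- If `Σ_{i,j} (A₁)_{ij} ≠ 0`, `f > 0` entrywise, and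
`C̄ ≥ (1/(mn)) Σ_{i,j} ((A₂)_{ij} + f_{ij} e^{-(A₂)_{ij}} - log f_{ij})`, then the
equation `K(τ) = 0` has at least one real solution. -/
theorem discrepancy_zero_exists (m n : ℕ) (hm : 0 < m) (hn : 0 < n)
    (A1 A2 f : Fin m → Fin n → ℝ) (hf : ∀ i j, 0 < f i j)
    (hA1 : (∑ i, ∑ j, A1 i j) ≠ 0) (C : ℝ)
    (hC : (1 / ((m : ℝ) * n)) *
        ∑ i, ∑ j, (A2 i j + f i j * Real.exp (-(A2 i j)) - Real.log (f i j)) ≤ C) :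
    ∃ τ : ℝ, discrepK m n A1 A2 f C τ = 0 := by
  have hmn : (0:ℝ) < (m : ℝ) * n := by positivity
  set S := ∑ i, ∑ j, A1 i j with hS
  set B := ∑ i, ∑ j, (A2 i j - Real.log (f i j)) with hB
  set τ₁ := ((m:ℝ) * n * C - B) / S with hτ
  have h0 : discrepK m n A1 A2 f C 0 ≤ 0 := by
    simp only [discrepK, mul_zero, zero_add]
    linarith
  have h1 : 0 ≤ discrepK m n A1 A2 f C τ₁ := by
    have hsum : ∑ i, ∑ j, (A1 i j * τ₁ + (A2 i j - Real.log (f i j))) ≤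
        ∑ i, ∑ j, (A1 i j * τ₁ + A2 i j +
          f i j * Real.exp (-(A1 i j * τ₁ + A2 i j)) - Real.log (f i j)) := by
      refine Finset.sum_le_sum fun i _ => Finset.sum_le_sum fun j _ => ?_
      have := mul_pos (hf i j) (Real.exp_pos (-(A1 i j * τ₁ + A2 i j)))
      linarith
    have hval : ∑ i, ∑ j, (A1 i j * τ₁ + (A2 i j - Real.log (f i j))) = S * τ₁ + B := by
      simp only [Finset.sum_add_distrib, hS, hB, Finset.sum_mul]
    have hSτ : S * τ₁ = (m:ℝ) * n * C - B := by
      rw [hτ]; field_simp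
    simp only [discrepK, sub_nonneg]
    calc C = (1 / ((m:ℝ) * n)) * (S * τ₁ + B) := by
            rw [hSτ]; field_simp; ring
      _ ≤ _ := by
            apply mul_le_mul_of_nonneg_left _ (by positivity)
            rw [← hval]; exact hsum
  have hcont : Continuous (discrepK m n A1 A2 f C) := by
    unfold discrepK
    apply Continuous.sub _ continuous_const
    apply Continuous.mul continuous_const
    apply continuous_finset_sum
    intro i _
    apply continuous_finset_sum
    intro j _
    fun_prop
  have := intermediate_value_uIcc (a := (0:ℝ)) (b := τ₁) hcont.continuousOn
  have h0mem : (0:ℝ) ∈ Set.uIcc (discrepK m n A1 A2 f C 0) (discrepK m n A1 A2 f C τ₁) :=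
    Set.mem_uIcc.mpr (Or.inl ⟨h0, h1⟩)
  obtain ⟨τ, _, hτ0⟩ := this h0mem
  exact ⟨τ, hτ0⟩
end

section
/- (Corollary 1: convergence of the PLAD method with box constraint.) Let m, n be positive integers, f ∈ ℝ^{m×n} with f_{i,j} > 0 for all i, j, and D(u) = Σ_{i,j}(u_{i,j} + f_{i,j} e^{−u_{i,j}}) with gradient ∇D(u)_{i,j} = 1 − f_{i,j} e^{−u_{i,j}}. Let ∇ be the discrete gradient with Neumann boundary conditions, div its negative adjoint, ‖z‖₁ the isotropic TV norm, and ‖Δ‖ the operator norm of u ↦ −div(∇u). Fix reals c_inf < c_sup, let U = { u ∈ ℝ^{m×n} : c_inf ≤ u_{i,j} ≤ c_sup for all i,j } and let P_U denote the (entrywise) Euclidean projection onto U. Fix τ₀ > 0, ρ > 0, set L = (max_{i,j} f_{i,j})·e^{−c_inf}, and let 0 < δ < 1/(τ₀ L + ρ‖Δ‖). Let (u^k, z^k, b^k)_{k≥0} satisfy for all k: u^{k+1} = P_U( u^k − δ( τ₀ ∇D(u^k) + ρ div(z^k − ∇u^k) + div b^k ) ); z^{k+1} is the minimizer of w ↦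 ‖w‖₁ + ⟨b^k, w − ∇u^{k+1}⟩ + (ρ/2)‖w − ∇u^{k+1}‖₂²; b^{k+1} = b^k + ρ(z^{k+1} − ∇u^{k+1}). Suppose (ū, z̄, b̄) with ū ∈ U satisfies: ∇ū = z̄; −b̄ is a subgradient of ‖·‖₁ at z̄; and there exists l̄ in the normal cone of U at ū with τ₀ ∇D(ū) + div b̄ + l̄ = 0. Then (u^k, z^k, b^k) converges to a point (u^∞, z^∞, b^∞) with u^∞ ∈ U satisfying these same first-order optimality conditions for the problem min_{u ∈ U, z} { τ₀ D(u) + ‖z‖₁ : ∇u = z }: ∇u^∞ = z^∞, −b^∞ is a subgradient of ‖·‖₁ at z^∞, and there exists l in the normal cone of U at u^∞ with τ₀ ∇D(u^∞) + div b^∞ + l = 0. -/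
open Finset Filter Topology
open RealInnerProductSpace

noncomputable section

/-- Images: `m × n` real matrices. -/
abbrev Mat (m n : ℕ) := Fin m → Fin n → ℝ

/-- Frobenius inner product on `ℝ^{m×n}`. -/
def mInner {m n : ℕ} (u v : Mat m n) : ℝ := ∑ i, ∑ j, u i j * v i j

/-- Frobenius (Euclidean) norm on `ℝ^{m×n}`. -/
def mNorm {m n : ℕ} (u : Mat m n) : ℝ := Real.sqrt (mInner u u)

/-- Inner product on pairs `z = (z¹, z²)`. -/
def pInner {m n : ℕ} (p q : Mat m n × Mat m n) : ℝ := mInner p.1 q.1 + mInner p.2 q.2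

/-- Euclidean norm on pairs. -/
def pNorm {m n : ℕ} (p : Mat m n × Mat m n) : ℝ := Real.sqrt (pInner p p)

/-- Isotropic TV norm `‖z‖₁ = Σ_{i,j} √((z¹_{ij})² + (z²_{ij})²)`. -/
def tvNorm {m n : ℕ} (z : Mat m n × Mat m n) : ℝ :=
  ∑ i, ∑ j, Real.sqrt ((z.1 i j) ^ 2 + (z.2 i j) ^ 2)

/-- Discrete gradient with Neumann boundary conditions. -/
def dgrad {m n : ℕ} (u : Mat m n) : Mat m n × Mat m n :=
  (fun i j => if h : (i : ℕ) + 1 < m then u ⟨(i : ℕ) + 1, h⟩ j - u i j else 0,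
   fun i j => if h : (j : ℕ) + 1 < n then u i ⟨(j : ℕ) + 1, h⟩ - u i j else 0)

/-- Gradient of the data-fidelity term: `∇D(u)_{ij} = 1 - f_{ij} e^{-u_{ij}}`. -/
def gradD {m n : ℕ} (f u : Mat m n) : Mat m n := fun i j => 1 - f i j * Real.exp (-(u i j))

/-- Data-fidelity term `D(u) = Σ_{i,j} (u_{ij} + f_{ij} e^{-u_{ij}})`. -/
def Dfun {m n : ℕ} (f u : Mat m n) : ℝ := ∑ i, ∑ j, (u i j + f i j * Real.exp (-(u i j)))

/-- `t` is a subgradient of the isotropic TV norm at `z`. -/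
def IsSubgradTV {m n : ℕ} (t z : Mat m n × Mat m n) : Prop :=
  ∀ w, tvNorm z + pInner t (w - z) ≤ tvNorm w

/-- The box `U = { u : c_inf ≤ u_{ij} ≤ c_sup }`. -/
def inBox {m n : ℕ} (cinf csup : ℝ) (u : Mat m n) : Prop :=
  ∀ i j, cinf ≤ u i j ∧ u i j ≤ csup

/-- Entrywise Euclidean projection onto the box `U` (clamping to `[c_inf, c_sup]`). -/
def boxProj {m n : ℕ} (cinf csup : ℝ) (u : Mat m n) : Mat m n :=
  fun i j => max cinf (min csup (u i j))

/-- `l` belongs to the normal cone of the box `U` at `x ∈ U`: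
`⟨l, y - x⟩ ≤ 0` for all `y ∈ U`. -/
def InNormalCone {m n : ℕ} (cinf csup : ℝ) (x l : Mat m n) : Prop :=
  ∀ y : Mat m n, inBox cinf csup y → mInner l (y - x) ≤ 0



private lemma tendsto_of_sq_bound {q f : ℕ → ℝ} (c : ℝ) (hc : 0 < c)
    (hq : Filter.Tendsto q Filter.atTop (nhds 0)) (h0 : ∀ k, 0 ≤ f k)
    (hb : ∀ k, c * (f k)^2 ≤ q k) : Filter.Tendsto f Filter.atTop (nhds 0) := by
  have h1 : Filter.Tendsto (fun k => c * (f k)^2) Filter.atTop (nhds 0) :=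
    tendsto_of_tendsto_of_tendsto_of_le_of_le tendsto_const_nhds hq
      (fun k => mul_nonneg hc.le (sq_nonneg _)) hb
  have h2 : Filter.Tendsto (fun k => (f k)^2) Filter.atTop (nhds 0) := by
    have h3 := h1.const_mul (1/c)
    have h4 : (fun k => (1/c) * (c * (f k)^2)) = fun k => (f k)^2 := by
      funext k; field_simp
    rw [h4] at h3
    simpa using h3
  have h4 := h2.sqrt
  have h5 : (fun k => Real.sqrt ((f k)^2)) = f := by
    funext k; exact Real.sqrt_sq (h0 k)
  rw [h5] at h4
  simpa using h4

private lemma le_sqrt_div {c M x : ℝ} (hc : 0 < c) (hx : 0 ≤ x) (h : c * x^2 ≤ M) :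
    x ≤ Real.sqrt (M / c) := by
  have h1 : x^2 ≤ M / c := by
    rw [le_div_iff₀ hc]
    calc x^2 * c = c * x^2 := by ring
      _ ≤ M := h
  have h2 : (0:ℝ) ≤ M / c := le_trans (sq_nonneg x) h1
  exact (Real.le_sqrt hx h2).mpr h1

set_option maxHeartbeats 1000000 in
theorem abstract_plad {E F : Type} [NormedAddCommGroup E] [InnerProductSpace ℝ E]
    [FiniteDimensional ℝ E] [NormedAddCommGroup F] [InnerProductSpace ℝ F]
    [FiniteDimensional ℝ F]
    (U : Set E) (hUc : IsClosed U)
    (P : E → E) (hPmem : ∀ v, P v ∈ U)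
    (hPchar : ∀ v, ∀ y ∈ U, ⟪v - P v, y - P v⟫ ≤ 0)
    (φ : F → ℝ) (hφc : Continuous φ)
    (A : E → F) (B : F → E) (hAB : ∀ x p, ⟪A x, p⟫ = -⟪x, B p⟫)
    (Δ : ℝ) (hΔ : ∀ x, ‖B (A x)‖ ≤ Δ * ‖x‖)
    (G : E → E) (hGc : Continuous G) (L' : ℝ) (hL' : 0 < L')
    (hGco : ∀ x ∈ U, ∀ y ∈ U, ‖G x - G y‖^2 ≤ L' * ⟪G x - G y, x - y⟫)
    (ρ δ : ℝ) (hρ : 0 < ρ) (hδ0 : 0 < δ) (hstep : L' + ρ * Δ < 1/δ)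
    (u : ℕ → E) (z b : ℕ → F)
    (hUmem : ∀ k, u k ∈ U)
    (hu : ∀ k, u (k+1) = P (u k - δ • (G (u k) + ρ • B (z k - A (u k)) + B (b k))))
    (hsubg : ∀ k w, φ (z k) + ⟪-(b k), w - z k⟫ ≤ φ w)
    (hb : ∀ k, b (k+1) = b k + ρ • (z (k+1) - A (u (k+1))))
    (ubar : E) (bbar : F) (hubar : ubar ∈ U)
    (hsubbar : ∀ w, φ (A ubar) + ⟪-bbar, w - A ubar⟫ ≤ φ w)
    (hstat : ∀ y ∈ U, ⟪-(G ubar + B bbar), y - ubar⟫ ≤ 0) :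
    ∃ ui zi bi, Tendsto u atTop (𝓝 ui) ∧ Tendsto z atTop (𝓝 zi) ∧ Tendsto b atTop (𝓝 bi)
      ∧ ui ∈ U ∧ A ui = zi ∧ (∀ w, φ zi + ⟪-bi, w - zi⟫ ≤ φ w)
      ∧ ∀ y ∈ U, ⟪-(G ui + B bi), y - ui⟫ ≤ 0 := by
  -- linearity of A and B
  have hA_lin : IsLinearMap ℝ A := by
    constructor
    · intro x y
      apply ext_inner_right ℝ
      intro v
      rw [hAB, inner_add_left, inner_add_left, hAB, hAB]
      ring
    · intro c x
      apply ext_inner_right ℝ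
      intro v
      rw [hAB, real_inner_smul_left, real_inner_smul_left, hAB]
      ring
  have hB_lin : IsLinearMap ℝ B := by
    constructor
    · intro p q
      apply ext_inner_left ℝ
      intro v
      have h1 : ∀ q', ⟪v, B q'⟫ = -⟪A v, q'⟫ := fun q' => by rw [hAB]; ring
      rw [h1, inner_add_right, inner_add_right, h1, h1]
      ring
    · intro c p
      apply ext_inner_left ℝ
      intro v
      have h1 : ∀ q', ⟪v, B q'⟫ = -⟪A v, q'⟫ := fun q' => by rw [hAB]; ring
      rw [h1, real_inner_smul_right, real_inner_smul_right, h1]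
      ring
  have hAcont : Continuous A := (hA_lin.mk' A).continuous_of_finiteDimensional
  have hBcont : Continuous B := (hB_lin.mk' B).continuous_of_finiteDimensional
  have hAsub : ∀ x y, A (x - y) = A x - A y := (hA_lin.mk' A).map_sub
  have hBsub : ∀ p q, B (p - q) = B p - B q := (hB_lin.mk' B).map_sub

  have hρne : ρ ≠ 0 := ne_of_gt hρ
  have hAsq : ∀ x : E, ‖A x‖^2 ≤ Δ * ‖x‖^2 := by
    intro x
    have h1 : ⟪A x, A x⟫ = -⟪x, B (A x)⟫ := hAB x (A x)
    have h2 := abs_real_inner_le_norm x (B (A x))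
    have h3 : ‖x‖ * ‖B (A x)‖ ≤ ‖x‖ * (Δ * ‖x‖) :=
      mul_le_mul_of_nonneg_left (hΔ x) (norm_nonneg x)
    have h4 : ‖A x‖^2 = ⟪A x, A x⟫ := (real_inner_self_eq_norm_sq _).symm
    have h5 : -⟪x, B (A x)⟫ ≤ |⟪x, B (A x)⟫| := neg_le_abs _
    nlinarith
  have key : ∀ (v : E) (bb : F), v ∈ U →
      (∀ w, φ (A v) + ⟪-bb, w - A v⟫ ≤ φ w) →
      (∀ y ∈ U, ⟪-(G v + B bb), y - v⟫ ≤ 0) →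
      ∀ k,
        (1/δ)*‖u (k+1) - v‖^2 + ρ*‖z (k+1) - A v‖^2 - ρ*‖A (u (k+1) - v)‖^2
            + (1/ρ)*‖b (k+1) - bb‖^2
            + ρ*‖z (k+1) - A (u (k+1))‖^2 + (1/δ - L'/2 - ρ*Δ)*‖u (k+1) - u k‖^2
          ≤ (1/δ)*‖u k - v‖^2 + ρ*‖z k - A v‖^2 - ρ*‖A (u k - v)‖^2
            + (1/ρ)*‖b k - bb‖^2 := by
    intro v bb hvU hsubv hstatv k
    set s : E := u (k+1) - u k with hs_def
    set e1 : E := u (k+1) - v with he1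
    set e0 : E := u k - v with he0
    set z1 : F := z (k+1) - A v with hz1
    set z0 : F := z k - A v with hz0
    set c1 : F := b (k+1) - bb with hc1d
    set c0 : F := b k - bb with hc0d
    set r1 : F := z (k+1) - A (u (k+1)) with hr1d
    set r0 : F := z k - A (u k) with hr0d
    -- basic identities
    have hr1 : r1 = z1 - A e1 := by rw [hr1d, hz1, he1, hAsub]; abel
    have hr0 : r0 = z0 - A e0 := by rw [hr0d, hz0, he0, hAsub]; abel
    have hbrec : b (k+1) = b k + ρ • r1 := by rw [hb k, hr1d]
    have hcrec : c1 = c0 + ρ • r1 := by rw [hc1d, hc0d, hbrec]; abel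
    have he10 : e1 - e0 = s := by rw [he1, he0, hs_def]; abel
    have hAe10 : A e1 - A e0 = A s := by rw [← hAsub, he10]
    -- C1' : dual update identity
    have hn : ‖c1‖^2 = ‖c0‖^2 + 2*(ρ*⟪c0, r1⟫) + ρ^2*‖r1‖^2 := by
      rw [hcrec, norm_add_sq_real, real_inner_smul_right, norm_smul]
      rw [Real.norm_eq_abs, mul_pow, sq_abs]
    have ha1 : ⟪c1, r1⟫ = ⟪c0, r1⟫ + ρ*‖r1‖^2 := by
      rw [hcrec, inner_add_left, real_inner_smul_left, real_inner_self_eq_norm_sq]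
    have C1 : ‖c1‖^2 = ‖c0‖^2 + 2*ρ*⟪c1, r1⟫ - ρ^2*‖r1‖^2 := by
      rw [ha1]; linear_combination hn
    have C1' : (1/ρ)*‖c1‖^2 = (1/ρ)*‖c0‖^2 + 2*⟪c1, r1⟫ - ρ*‖r1‖^2 := by
      rw [C1]; field_simp
    -- h2 : ⟪c1, z1⟫ ≤ 0
    have h2 : ⟪c1, z1⟫ ≤ 0 := by
      have p1 := hsubg (k+1) (A v)
      have p2 := hsubv (z (k+1))
      have q1 : ⟪-(b (k+1)), A v - z (k+1)⟫
          = -⟪b (k+1), A v⟫ + ⟪b (k+1), z (k+1)⟫ := by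
        rw [inner_neg_left, inner_sub_right]; ring
      have q2 : ⟪-bb, z (k+1) - A v⟫ = -⟪bb, z (k+1)⟫ + ⟪bb, A v⟫ := by
        rw [inner_neg_left, inner_sub_right]; ring
      have q3 : ⟪c1, z1⟫ = ⟪b (k+1), z (k+1)⟫ - ⟪b (k+1), A v⟫
          - ⟪bb, z (k+1)⟫ + ⟪bb, A v⟫ := by
        rw [hc1d, hz1, inner_sub_left, inner_sub_right, inner_sub_right]; ring
      linarith [p1, p2]
    -- h3 : consecutive monotonicity
    have h3 : ⟪r1, z1⟫ - ⟪r1, z0⟫ ≤ 0 := by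
      have p1 := hsubg (k+1) (z k)
      have p2 := hsubg k (z (k+1))
      have q1 : ⟪-(b (k+1)), z k - z (k+1)⟫
          = -⟪b (k+1), z k⟫ + ⟪b (k+1), z (k+1)⟫ := by
        rw [inner_neg_left, inner_sub_right]; ring
      have q2 : ⟪-(b k), z (k+1) - z k⟫ = -⟪b k, z (k+1)⟫ + ⟪b k, z k⟫ := by
        rw [inner_neg_left, inner_sub_right]; ring
      have q3 : ρ*(⟪r1, z1⟫ - ⟪r1, z0⟫) = ⟪b (k+1), z (k+1)⟫ - ⟪b (k+1), z k⟫
          - ⟪b k, z (k+1)⟫ + ⟪b k, z k⟫ := by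
        rw [hz1, hz0, hbrec]
        simp only [inner_add_left, inner_sub_right, real_inner_smul_left]
        ring
      have h3' : ρ*(⟪r1, z1⟫ - ⟪r1, z0⟫) ≤ ρ * 0 := by
        rw [mul_zero, q3]; linarith [p1, p2]
      exact le_of_mul_le_mul_left (by linarith [h3']) hρ
    -- C2
    have C2 : ⟪c1, r1⟫ ≤ -⟪A e1, c0⟫ - ρ*⟪A e1, r1⟫ := by
      have hx : ⟪c1, r1⟫ = ⟪c1, z1⟫ - ⟪c1, A e1⟫ := by
        rw [hr1, inner_sub_right]
      have hy : ⟪c1, A e1⟫ = ⟪c0, A e1⟫ + ρ*⟪r1, A e1⟫ := by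
        rw [hcrec, inner_add_left, real_inner_smul_left]
      have hcm1 : ⟪c0, A e1⟫ = ⟪A e1, c0⟫ := real_inner_comm _ _
      have hcm2 : ρ*⟪r1, A e1⟫ = ρ*⟪A e1, r1⟫ := by rw [real_inner_comm]
      linarith [h2, hx, hy, hcm1, hcm2]
    -- projection step inequality
    have huk : u (k+1) = P (u k - δ • (G (u k) + ρ • B r0 + B (b k))) := by
      rw [hu k, hr0d]
    set gk : E := G (u k) + ρ • B r0 + B (b k) with hgk
    have hpr := hPchar (u k - δ • gk) v hvU
    rw [← huk] at hpr
    have hw1 : u k - δ • gk - u (k+1) = -s - δ • gk := by rw [hs_def]; abel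
    have hw2 : v - u (k+1) = -e1 := by rw [he1]; abel
    rw [hw1, hw2] at hpr
    have hexp : ⟪-s - δ • gk, -e1⟫ = ⟪s, e1⟫ + δ*⟪gk, e1⟫ := by
      simp only [inner_neg_left, inner_neg_right, inner_sub_left, real_inner_smul_left]
      ring
    rw [hexp] at hpr
    have hst := hstatv (u (k+1)) (hUmem (k+1))
    rw [← he1] at hst
    have hst' : 0 ≤ ⟪G v, e1⟫ + ⟪B bb, e1⟫ := by
      simp only [inner_neg_left, inner_add_left] at hst; linarith
    have hBb : B (b k) = B c0 + B bb := by rw [hc0d, hBsub]; abel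
    have hgke : ⟪gk, e1⟫ = ⟪G (u k) - G v, e1⟫ + ⟪G v, e1⟫ + ρ*⟪B r0, e1⟫
        + ⟪B c0, e1⟫ + ⟪B bb, e1⟫ := by
      rw [hgk, hBb]
      simp only [inner_add_left, real_inner_smul_left, inner_sub_left]
      ring
    have hadj0 : ⟪B r0, e1⟫ = -⟪A e1, r0⟫ := by
      rw [hAB e1 r0, neg_neg]; exact real_inner_comm e1 (B r0)
    have hadjc : ⟪B c0, e1⟫ = -⟪A e1, c0⟫ := by
      rw [hAB e1 c0, neg_neg]; exact real_inner_comm e1 (B c0)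
    have hadj0ρ : ρ*⟪B r0, e1⟫ = ρ*(-⟪A e1, r0⟫) := by rw [hadj0]
    have h5 : ⟪gk, e1⟫ ≤ (1/δ)*(-⟪s, e1⟫) := by
      rw [show (1/δ)*(-⟪s, e1⟫) = (-⟪s, e1⟫)/δ from one_div_mul_eq_div δ _]
      rw [le_div_iff₀ hδ0]; linarith [hpr]
    have C3 : -⟪A e1, c0⟫ ≤ (1/δ)*(-⟪s, e1⟫) - ⟪G (u k) - G v, e1⟫ + ρ*⟪A e1, r0⟫ := by
      linarith [hgke, hst', hadj0ρ, hadjc, h5]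
    -- C4δ : primal distance identity
    have he0e1 : e0 = e1 - s := by rw [← he10]; abel
    have C4 : -2*⟪s, e1⟫ = ‖e0‖^2 - ‖e1‖^2 - ‖s‖^2 := by
      rw [he0e1, norm_sub_sq_real]
      have hcm : ⟪e1, s⟫ = ⟪s, e1⟫ := real_inner_comm _ _
      linarith [hcm]
    have C4δ : (1/δ)*(-2*⟪s, e1⟫) = (1/δ)*(‖e0‖^2 - ‖e1‖^2 - ‖s‖^2) := by rw [C4]
    -- HE : cocoercivity estimate
    have HE : -2*⟪G (u k) - G v, e1⟫ ≤ (L'/2)*‖s‖^2 := by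
      have hco := hGco (u k) (hUmem k) v hvU
      rw [← he0] at hco
      have hsplit : ⟪G (u k) - G v, e1⟫ = ⟪G (u k) - G v, e0⟫ + ⟪G (u k) - G v, s⟫ := by
        have : e1 = e0 + s := by rw [← he10]; abel
        rw [this, inner_add_right]
      have hcs : -⟪G (u k) - G v, s⟫ ≤ ‖G (u k) - G v‖ * ‖s‖ :=
        (neg_le_abs _).trans (abs_real_inner_le_norm (G (u k) - G v) s)
      have q : 0 ≤ (2/L') * (‖G (u k) - G v‖ - (L'/2)*‖s‖)^2 := by positivity
      have qe : (2/L') * (‖G (u k) - G v‖ - (L'/2)*‖s‖)^2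
          = (2/L')*‖G (u k) - G v‖^2 - 2*(‖G (u k) - G v‖*‖s‖) + (L'/2)*‖s‖^2 := by
        field_simp; ring
      have hm2 : (2/L')*‖G (u k) - G v‖^2 ≤ 2*⟪G (u k) - G v, e0⟫ := by
        rw [div_mul_eq_mul_div, div_le_iff₀ hL']
        linarith [hco]
      linarith [hsplit, hcs, q, qe, hm2]
    -- HFGH
    have hdecomp : r0 - r1 = (z0 - z1) + (A e1 - A e0) := by rw [hr0, hr1]; abel
    have HFGH : 2*⟪A e1, r0⟫ - 2*⟪A e1, r1⟫
        ≤ ‖z0‖^2 - ‖z1‖^2 + ‖A e1‖^2 - ‖A e0‖^2 + Δ*‖s‖^2 := by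
      have t00 : ⟪A e1, r0 - r1⟫ = ⟪A e1, r0⟫ - ⟪A e1, r1⟫ := inner_sub_right _ _ _
      have t0 : ⟪A e1, r0 - r1⟫ = ⟪A e1, z0 - z1⟫ + (⟪A e1, A e1⟫ - ⟪A e1, A e0⟫) := by
        rw [hdecomp, inner_add_right]
        congr 1
        exact inner_sub_right _ _ _
      have hAe1eq : A e1 = z1 - r1 := by rw [hr1]; abel
      have t2 : ⟪A e1, z0 - z1⟫ = ⟪z1, z0 - z1⟫ - ⟪r1, z0 - z1⟫ := by
        rw [hAe1eq, inner_sub_left]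
      have t3 : ⟪r1, z0 - z1⟫ = ⟪r1, z0⟫ - ⟪r1, z1⟫ := inner_sub_right _ _ _
      have t5 : 2*⟪z1, z0 - z1⟫ ≤ ‖z0‖^2 - ‖z1‖^2 := by
        have hN : ‖z0 - z1‖^2 = ‖z0‖^2 - 2*⟪z0, z1⟫ + ‖z1‖^2 := norm_sub_sq_real z0 z1
        have hposs := sq_nonneg ‖z0 - z1‖
        have hexp2 : ⟪z1, z0 - z1⟫ = ⟪z1, z0⟫ - ‖z1‖^2 := by
          rw [inner_sub_right, real_inner_self_eq_norm_sq]
        have hc : ⟪z1, z0⟫ = ⟪z0, z1⟫ := real_inner_comm _ _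
        linarith
      have t6 : 2*(⟪A e1, A e1⟫ - ⟪A e1, A e0⟫) = ‖A e1‖^2 - ‖A e0‖^2 + ‖A s‖^2 := by
        have hAe0 : A e0 = A e1 - A s := by rw [← hAe10]; abel
        have hN2 : ‖A e1 - A s‖^2 = ‖A e1‖^2 - 2*⟪A e1, A s⟫ + ‖A s‖^2 :=
          norm_sub_sq_real _ _
        have hexp3 : ⟪A e1, A e0⟫ = ⟪A e1, A e1⟫ - ⟪A e1, A s⟫ := by
          rw [hAe0, inner_sub_right]
        have hself : ⟪A e1, A e1⟫ = ‖A e1‖^2 := real_inner_self_eq_norm_sq _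
        have hno : ‖A e0‖^2 = ‖A e1 - A s‖^2 := by rw [hAe0]
        linarith
      have t7 : ‖A s‖^2 ≤ Δ*‖s‖^2 := hAsq s
      linarith [t00, t0, t2, t3, h3, t5, t6, t7]
    have HFGHρ : ρ*(2*⟪A e1, r0⟫ - 2*⟪A e1, r1⟫)
        ≤ ρ*(‖z0‖^2 - ‖z1‖^2 + ‖A e1‖^2 - ‖A e0‖^2 + Δ*‖s‖^2) :=
      mul_le_mul_of_nonneg_left HFGH hρ.le
    -- final assembly
    have C2' : 2*⟪c1, r1⟫ ≤ 2*(-⟪A e1, c0⟫) - 2*(ρ*⟪A e1, r1⟫) := by linarith [C2]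
    linarith [C1', C2', C3, C4δ, HFGHρ, HE]

  have hε : 0 < 1/δ - L' - ρ*Δ := by linarith
  have hρinv : (0:ℝ) < 1/ρ := by positivity
  -- lower bound for the energy
  have lowb : ∀ (v : E) (bb : F) (k : ℕ),
      (1/δ - L' - ρ*Δ)*‖u k - v‖^2 + ρ*‖z k - A v‖^2 + (1/ρ)*‖b k - bb‖^2
        ≤ (1/δ)*‖u k - v‖^2 + ρ*‖z k - A v‖^2 - ρ*‖A (u k - v)‖^2
          + (1/ρ)*‖b k - bb‖^2 := by
    intro v bb k
    have h1 := hAsq (u k - v)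
    have h2 : ρ*‖A (u k - v)‖^2 ≤ ρ*(Δ*‖u k - v‖^2) :=
      mul_le_mul_of_nonneg_left h1 hρ.le
    have h3 : 0 ≤ L'*‖u k - v‖^2 := mul_nonneg hL'.le (sq_nonneg _)
    linarith
  -- the general projection inequality
  have hprALL : ∀ k, ∀ y ∈ U,
      ⟪u k - δ • (G (u k) + ρ • B (z k - A (u k)) + B (b k)) - u (k+1),
        y - u (k+1)⟫ ≤ 0 := by
    intro k y hy
    have h := hPchar (u k - δ • (G (u k) + ρ • B (z k - A (u k)) + B (b k))) y hy
    rwa [← hu k] at h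
  -- energy with the bar point
  obtain ⟨En, hEn⟩ : ∃ f : ℕ → ℝ, f = fun k => (1/δ)*‖u k - ubar‖^2
      + ρ*‖z k - A ubar‖^2 - ρ*‖A (u k - ubar)‖^2 + (1/ρ)*‖b k - bbar‖^2 := ⟨_, rfl⟩
  have hdec := key ubar bbar hubar hsubbar hstat
  have hEnonneg : ∀ k, 0 ≤ En k := by
    intro k
    have h0 := lowb ubar bbar k
    have h1 : 0 ≤ (1/δ - L' - ρ*Δ)*‖u k - ubar‖^2 := mul_nonneg hε.le (sq_nonneg _)
    have h2 : 0 ≤ ρ*‖z k - A ubar‖^2 := mul_nonneg hρ.le (sq_nonneg _)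
    have h3 : 0 ≤ (1/ρ)*‖b k - bbar‖^2 := mul_nonneg hρinv.le (sq_nonneg _)
    simp only [hEn]
    linarith
  have hdec' : ∀ k, En (k+1) + ρ*‖z (k+1) - A (u (k+1))‖^2
      + (1/δ - L' - ρ*Δ)*‖u (k+1) - u k‖^2 ≤ En k := by
    intro k
    have h0 := hdec k
    have h1 : 0 ≤ (L'/2)*‖u (k+1) - u k‖^2 := by positivity
    simp only [hEn]
    linarith
  have hanti : Antitone En := antitone_nat_of_succ_le (by
    intro k
    have h0 := hdec' k
    have h1 : 0 ≤ ρ*‖z (k+1) - A (u (k+1))‖^2 := mul_nonneg hρ.le (sq_nonneg _)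
    have h2 : 0 ≤ (1/δ - L' - ρ*Δ)*‖u (k+1) - u k‖^2 := mul_nonneg hε.le (sq_nonneg _)
    linarith)
  -- summability of residuals
  have hsum : ∀ N, ∑ k ∈ Finset.range N,
      (ρ*‖z (k+1) - A (u (k+1))‖^2 + (1/δ - L' - ρ*Δ)*‖u (k+1) - u k‖^2) ≤ En 0 := by
    intro N
    calc ∑ k ∈ Finset.range N,
        (ρ*‖z (k+1) - A (u (k+1))‖^2 + (1/δ - L' - ρ*Δ)*‖u (k+1) - u k‖^2)
        ≤ ∑ k ∈ Finset.range N, (En k - En (k+1)) :=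
          Finset.sum_le_sum (fun k _ => by linarith [hdec' k])
      _ = En 0 - En N := Finset.sum_range_sub' En N
      _ ≤ En 0 := by linarith [hEnonneg N]
  have hqnn : ∀ k, 0 ≤ ρ*‖z (k+1) - A (u (k+1))‖^2
      + (1/δ - L' - ρ*Δ)*‖u (k+1) - u k‖^2 :=
    fun k => add_nonneg (mul_nonneg hρ.le (sq_nonneg _)) (mul_nonneg hε.le (sq_nonneg _))
  have hq0 := (summable_of_sum_range_le hqnn hsum).tendsto_atTop_zero
  have hrt : Tendsto (fun k => ‖z (k+1) - A (u (k+1))‖) atTop (𝓝 0) :=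
    tendsto_of_sq_bound ρ hρ hq0 (fun k => norm_nonneg _)
      (fun k => by linarith [mul_nonneg hε.le (sq_nonneg ‖u (k+1) - u k‖)])
  have hst : Tendsto (fun k => ‖u (k+1) - u k‖) atTop (𝓝 0) :=
    tendsto_of_sq_bound (1/δ - L' - ρ*Δ) hε hq0 (fun k => norm_nonneg _)
      (fun k => by linarith [mul_nonneg hρ.le (sq_nonneg ‖z (k+1) - A (u (k+1))‖)])
  have hrt' : Tendsto (fun k => ‖z k - A (u k)‖) atTop (𝓝 0) :=
    (tendsto_add_atTop_iff_nat (f := fun k => ‖z k - A (u k)‖) 1).mp hrt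
  -- boundedness of the iterates
  have hboundall : ∀ k, (1/δ - L' - ρ*Δ)*‖u k - ubar‖^2 + ρ*‖z k - A ubar‖^2
      + (1/ρ)*‖b k - bbar‖^2 ≤ En 0 := by
    intro k
    have h0 := lowb ubar bbar k
    have h2 : En k ≤ En 0 := hanti (Nat.zero_le k)
    have h3 := hEnonneg k
    have h4 : (1/δ - L' - ρ*Δ)*‖u k - ubar‖^2 + ρ*‖z k - A ubar‖^2
        + (1/ρ)*‖b k - bbar‖^2 ≤ En k := by
      simp only [hEn]; exact h0
    linarith
  set T : ℕ → E × F × F := fun k => (u k, z k, b k) with hT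
  have hCbound : ∀ k, ‖T k‖ ≤ max (‖ubar‖ + Real.sqrt (En 0 / (1/δ - L' - ρ*Δ)))
      (max (‖A ubar‖ + Real.sqrt (En 0 / ρ)) (‖bbar‖ + Real.sqrt (En 0 / (1/ρ)))) := by
    intro k
    have hb0 := hboundall k
    have h2 : 0 ≤ ρ*‖z k - A ubar‖^2 := mul_nonneg hρ.le (sq_nonneg _)
    have h3 : 0 ≤ (1/ρ)*‖b k - bbar‖^2 := mul_nonneg hρinv.le (sq_nonneg _)
    have h1 : 0 ≤ (1/δ - L' - ρ*Δ)*‖u k - ubar‖^2 := mul_nonneg hε.le (sq_nonneg _)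
    have hu' : ‖u k‖ ≤ ‖ubar‖ + Real.sqrt (En 0 / (1/δ - L' - ρ*Δ)) := by
      have := le_sqrt_div (M := En 0) hε (norm_nonneg (u k - ubar)) (by linarith)
      have h4 := norm_sub_norm_le (u k) ubar
      linarith
    have hz' : ‖z k‖ ≤ ‖A ubar‖ + Real.sqrt (En 0 / ρ) := by
      have := le_sqrt_div (M := En 0) hρ (norm_nonneg (z k - A ubar)) (by linarith)
      have h4 := norm_sub_norm_le (z k) (A ubar)
      linarith
    have hb' : ‖b k‖ ≤ ‖bbar‖ + Real.sqrt (En 0 / (1/ρ)) := by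
      have := le_sqrt_div (M := En 0) hρinv (norm_nonneg (b k - bbar)) (by linarith)
      have h4 := norm_sub_norm_le (b k) bbar
      linarith
    have : ‖T k‖ = max ‖u k‖ (max ‖z k‖ ‖b k‖) := by
      rw [hT]
      simp only [Prod.norm_def]
    rw [this]
    exact max_le_max hu' (max_le_max hz' hb')
  have hbd : Bornology.IsBounded (Set.range T) := by
    rw [isBounded_iff_forall_norm_le]
    exact ⟨_, by rintro x ⟨k, rfl⟩; exact hCbound k⟩
  obtain ⟨a, -, ψ, hψ, hconv⟩ := tendsto_subseq_of_bounded hbd (fun n => Set.mem_range_self (f := T) n)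
  -- component convergence along the subsequence
  have hTu : Tendsto (fun j => u (ψ j)) atTop (𝓝 a.1) := by
    have := (continuous_fst.tendsto a).comp hconv
    simpa [hT, Function.comp_def] using this
  have hTz : Tendsto (fun j => z (ψ j)) atTop (𝓝 a.2.1) := by
    have := ((continuous_fst.comp continuous_snd).tendsto a).comp hconv
    simpa [hT, Function.comp_def] using this
  have hTb : Tendsto (fun j => b (ψ j)) atTop (𝓝 a.2.2) := by
    have := ((continuous_snd.comp continuous_snd).tendsto a).comp hconv
    simpa [hT, Function.comp_def] using this
  have hψtop : Tendsto ψ atTop atTop := hψ.tendsto_atTop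
  have hstψ : Tendsto (fun j => u (ψ j + 1) - u (ψ j)) atTop (𝓝 0) := by
    rw [tendsto_zero_iff_norm_tendsto_zero]
    have h1 : Tendsto (fun j => ‖u (ψ j + 1) - u (ψ j)‖) atTop (𝓝 0) :=
      hst.comp hψtop
    exact h1
  have hTu1 : Tendsto (fun j => u (ψ j + 1)) atTop (𝓝 a.1) := by
    have h1 := hstψ.add hTu
    simp only [zero_add] at h1
    have h2 : (fun j => u (ψ j + 1) - u (ψ j) + u (ψ j)) = fun j => u (ψ j + 1) := by
      funext j; abel
    rwa [h2] at h1
  have hrψ : Tendsto (fun j => z (ψ j) - A (u (ψ j))) atTop (𝓝 0) := by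
    rw [tendsto_zero_iff_norm_tendsto_zero]
    exact hrt'.comp hψtop
  have hAuψ : Tendsto (fun j => A (u (ψ j))) atTop (𝓝 (A a.1)) := by
    have := (hAcont.tendsto a.1).comp hTu
    simpa [Function.comp_def] using this
  -- cluster point properties
  have cU : a.1 ∈ U :=
    hUc.mem_of_tendsto hTu (Filter.Eventually.of_forall fun j => hUmem (ψ j))
  have czA : A a.1 = a.2.1 := by
    have h1 : Tendsto (fun j => z (ψ j) - A (u (ψ j))) atTop (𝓝 (a.2.1 - A a.1)) :=
      hTz.sub hAuψ
    have h2 := tendsto_nhds_unique h1 hrψ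
    have := sub_eq_zero.mp h2
    exact this.symm
  have csub : ∀ w, φ a.2.1 + ⟪-a.2.2, w - a.2.1⟫ ≤ φ w := by
    intro w
    have hseq : Tendsto (fun j => φ (z (ψ j)) + ⟪-(b (ψ j)), w - z (ψ j)⟫) atTop
        (𝓝 (φ a.2.1 + ⟪-a.2.2, w - a.2.1⟫)) := by
      apply Tendsto.add
      · have := (hφc.tendsto a.2.1).comp hTz
        simpa [Function.comp_def] using this
      · exact Tendsto.inner hTb.neg (tendsto_const_nhds.sub hTz)
    exact le_of_tendsto hseq (Filter.Eventually.of_forall fun j => hsubg (ψ j) w)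
  have cstat : ∀ y ∈ U, ⟪-(G a.1 + B a.2.2), y - a.1⟫ ≤ 0 := by
    intro y hy
    have hG1 : Tendsto (fun j => G (u (ψ j))) atTop (𝓝 (G a.1)) := by
      have := (hGc.tendsto a.1).comp hTu
      simpa [Function.comp_def] using this
    have hB1 : Tendsto (fun j => B (z (ψ j) - A (u (ψ j)))) atTop (𝓝 0) := by
      have := (hBcont.tendsto 0).comp hrψ
      have hB0 : B (0 : F) = 0 := (hB_lin.mk' B).map_zero
      rw [hB0] at this
      simpa [Function.comp_def] using this
    have hB2 : Tendsto (fun j => B (b (ψ j))) atTop (𝓝 (B a.2.2)) := by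
      have := (hBcont.tendsto a.2.2).comp hTb
      simpa [Function.comp_def] using this
    have hfirst : Tendsto (fun j => u (ψ j)
        - δ • (G (u (ψ j)) + ρ • B (z (ψ j) - A (u (ψ j))) + B (b (ψ j)))
        - u (ψ j + 1)) atTop (𝓝 (a.1 - δ • (G a.1 + ρ • (0:E) + B a.2.2) - a.1)) := by
      exact (hTu.sub (((hG1.add (hB1.const_smul ρ)).add hB2).const_smul δ)).sub hTu1
    have hsec : Tendsto (fun j => y - u (ψ j + 1)) atTop (𝓝 (y - a.1)) :=
      tendsto_const_nhds.sub hTu1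
    have hval := Tendsto.inner (𝕜 := ℝ) hfirst hsec
    have hle := le_of_tendsto hval
      (Filter.Eventually.of_forall fun j => hprALL (ψ j) y hy)
    have hsimp : a.1 - δ • (G a.1 + ρ • (0:E) + B a.2.2) - a.1
        = δ • (-(G a.1 + B a.2.2)) := by
      rw [smul_zero, smul_neg]
      abel
    rw [hsimp, real_inner_smul_left] at hle
    have := le_of_mul_le_mul_left (by linarith [hle] : δ * ⟪-(G a.1 + B a.2.2), y - a.1⟫ ≤ δ * 0) hδ0
    linarith [this]
  -- second application of key, with the cluster point
  have csub' : ∀ w, φ (A a.1) + ⟪-a.2.2, w - A a.1⟫ ≤ φ w := by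
    rw [czA]; exact csub
  have hdec2 := key a.1 a.2.2 cU csub' cstat
  obtain ⟨En2, hEn2⟩ : ∃ f : ℕ → ℝ, f = fun k => (1/δ)*‖u k - a.1‖^2
      + ρ*‖z k - A a.1‖^2 - ρ*‖A (u k - a.1)‖^2 + (1/ρ)*‖b k - a.2.2‖^2 := ⟨_, rfl⟩
  have hEn2nonneg : ∀ k, 0 ≤ En2 k := by
    intro k
    have h0 := lowb a.1 a.2.2 k
    have h1 : 0 ≤ (1/δ - L' - ρ*Δ)*‖u k - a.1‖^2 := mul_nonneg hε.le (sq_nonneg _)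
    have h2 : 0 ≤ ρ*‖z k - A a.1‖^2 := mul_nonneg hρ.le (sq_nonneg _)
    have h3 : 0 ≤ (1/ρ)*‖b k - a.2.2‖^2 := mul_nonneg hρinv.le (sq_nonneg _)
    simp only [hEn2]
    linarith
  have hanti2 : Antitone En2 := antitone_nat_of_succ_le (by
    intro k
    have h0 := hdec2 k
    have h1 : 0 ≤ ρ*‖z (k+1) - A (u (k+1))‖^2 := mul_nonneg hρ.le (sq_nonneg _)
    have h2 : 0 ≤ (1/δ - L'/2 - ρ*Δ)*‖u (k+1) - u k‖^2 := by
      apply mul_nonneg (by linarith) (sq_nonneg _)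
    simp only [hEn2]
    linarith)
  have hEn2conv : Tendsto En2 atTop (𝓝 (⨅ k, En2 k)) :=
    tendsto_atTop_ciInf hanti2 ⟨0, by rintro x ⟨k, rfl⟩; exact hEn2nonneg k⟩
  have hEn2ψ : Tendsto (fun j => En2 (ψ j)) atTop (𝓝 0) := by
    have hu0 : Tendsto (fun j => u (ψ j) - a.1) atTop (𝓝 0) := by
      have := hTu.sub (tendsto_const_nhds (x := a.1))
      simpa using this
    have hz0 : Tendsto (fun j => z (ψ j) - A a.1) atTop (𝓝 0) := by
      have := hTz.sub (tendsto_const_nhds (x := A a.1))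
      rw [czA] at this ⊢
      simpa using this
    have hb0 : Tendsto (fun j => b (ψ j) - a.2.2) atTop (𝓝 0) := by
      have := hTb.sub (tendsto_const_nhds (x := a.2.2))
      simpa using this
    have hA0 : Tendsto (fun j => A (u (ψ j) - a.1)) atTop (𝓝 0) := by
      have := (hAcont.tendsto 0).comp hu0
      have hA00 : A (0 : E) = 0 := (hA_lin.mk' A).map_zero
      rw [hA00] at this
      simpa [Function.comp_def] using this
    have nsq : ∀ {X : Type} [inst : NormedAddCommGroup X] (g : ℕ → X),
        Tendsto g atTop (𝓝 0) → Tendsto (fun j => ‖g j‖^2) atTop (𝓝 0) := by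
      intro X _ g hg
      have h1 : Tendsto (fun j => ‖g j‖) atTop (𝓝 0) := by
        rw [← tendsto_zero_iff_norm_tendsto_zero]
        exact hg
      have := h1.mul h1
      simpa [pow_two] using this
    have t1 := (nsq _ hu0).const_mul (1/δ)
    have t2 := (nsq _ hz0).const_mul ρ
    have t3 := (nsq _ hA0).const_mul ρ
    have t4 := (nsq _ hb0).const_mul (1/ρ)
    have := ((t1.add t2).sub t3).add t4
    simp only [mul_zero, add_zero, sub_zero] at this
    simpa [hEn2] using this
  have hiInf : (⨅ k, En2 k) = 0 :=
    tendsto_nhds_unique (hEn2conv.comp hψtop) hEn2ψ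
  have hEn2zero : Tendsto En2 atTop (𝓝 0) := by
    rw [← hiInf]; exact hEn2conv
  -- full convergence
  have hub2 : ∀ k, (1/δ - L' - ρ*Δ)*‖u k - a.1‖^2 ≤ En2 k := by
    intro k
    have h0 := lowb a.1 a.2.2 k
    have h2 : 0 ≤ ρ*‖z k - A a.1‖^2 := mul_nonneg hρ.le (sq_nonneg _)
    have h3 : 0 ≤ (1/ρ)*‖b k - a.2.2‖^2 := mul_nonneg hρinv.le (sq_nonneg _)
    simp only [hEn2]
    linarith
  have hzb2 : ∀ k, ρ*‖z k - A a.1‖^2 ≤ En2 k := by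
    intro k
    have h0 := lowb a.1 a.2.2 k
    have h1 : 0 ≤ (1/δ - L' - ρ*Δ)*‖u k - a.1‖^2 := mul_nonneg hε.le (sq_nonneg _)
    have h3 : 0 ≤ (1/ρ)*‖b k - a.2.2‖^2 := mul_nonneg hρinv.le (sq_nonneg _)
    simp only [hEn2]
    linarith
  have hbb2 : ∀ k, (1/ρ)*‖b k - a.2.2‖^2 ≤ En2 k := by
    intro k
    have h0 := lowb a.1 a.2.2 k
    have h1 : 0 ≤ (1/δ - L' - ρ*Δ)*‖u k - a.1‖^2 := mul_nonneg hε.le (sq_nonneg _)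
    have h2 : 0 ≤ ρ*‖z k - A a.1‖^2 := mul_nonneg hρ.le (sq_nonneg _)
    simp only [hEn2]
    linarith
  have huconv : Tendsto u atTop (𝓝 a.1) := by
    rw [tendsto_iff_norm_sub_tendsto_zero]
    exact tendsto_of_sq_bound _ hε hEn2zero (fun k => norm_nonneg _) hub2
  have hzconv : Tendsto z atTop (𝓝 a.2.1) := by
    rw [tendsto_iff_norm_sub_tendsto_zero]
    have := tendsto_of_sq_bound _ hρ hEn2zero (fun k => norm_nonneg _) hzb2
    rw [czA] at this
    exact this
  have hbconv : Tendsto b atTop (𝓝 a.2.2) := by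
    rw [tendsto_iff_norm_sub_tendsto_zero]
    exact tendsto_of_sq_bound _ hρinv hEn2zero (fun k => norm_nonneg _) hbb2
  exact ⟨a.1, a.2.1, a.2.2, huconv, hzconv, hbconv, cU, czA, csub, cstat⟩

-- transfer maps
def toE {m n : ℕ} (u : Mat m n) : EuclideanSpace ℝ (Fin m × Fin n) := WithLp.toLp 2 (fun p : Fin m × Fin n => u p.1 p.2)
def fromE {m n : ℕ} (x : EuclideanSpace ℝ (Fin m × Fin n)) : Mat m n := fun i j => x (i, j)
def toF {m n : ℕ} (w : Mat m n × Mat m n) :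
    EuclideanSpace ℝ ((Fin m × Fin n) ⊕ (Fin m × Fin n)) :=
  WithLp.toLp 2 (Sum.elim (fun p : Fin m × Fin n => w.1 p.1 p.2) (fun p : Fin m × Fin n => w.2 p.1 p.2))
def fromF {m n : ℕ} (q : EuclideanSpace ℝ ((Fin m × Fin n) ⊕ (Fin m × Fin n))) :
    Mat m n × Mat m n :=
  (fun i j => q (Sum.inl (i, j)), fun i j => q (Sum.inr (i, j)))

lemma fromE_toE {m n : ℕ} (u : Mat m n) : fromE (toE u) = u := rfl
lemma toE_fromE {m n : ℕ} (x : EuclideanSpace ℝ (Fin m × Fin n)) : toE (fromE x) = x := rfl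
lemma fromF_toF {m n : ℕ} (w : Mat m n × Mat m n) : fromF (toF w) = w := rfl
lemma toF_fromF {m n : ℕ} (q : EuclideanSpace ℝ ((Fin m × Fin n) ⊕ (Fin m × Fin n))) :
    toF (fromF q) = q := by
  ext s; cases s with
  | inl p => rfl
  | inr p => rfl

lemma toE_sub {m n : ℕ} (u v : Mat m n) : toE (u - v) = toE u - toE v := rfl
lemma toE_add {m n : ℕ} (u v : Mat m n) : toE (u + v) = toE u + toE v := rfl
lemma toE_smul {m n : ℕ} (c : ℝ) (u : Mat m n) : toE (c • u) = c • toE u := rfl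
lemma toE_neg {m n : ℕ} (u : Mat m n) : toE (-u) = -toE u := rfl
lemma toF_sub {m n : ℕ} (u v : Mat m n × Mat m n) : toF (u - v) = toF u - toF v := by
  ext s; cases s with
  | inl p => rfl
  | inr p => rfl
lemma toF_add {m n : ℕ} (u v : Mat m n × Mat m n) : toF (u + v) = toF u + toF v := by
  ext s; cases s with
  | inl p => rfl
  | inr p => rfl
lemma toF_smul {m n : ℕ} (c : ℝ) (u : Mat m n × Mat m n) : toF (c • u) = c • toF u := by
  ext s; cases s with
  | inl p => rfl
  | inr p => rfl
lemma toF_neg {m n : ℕ} (u : Mat m n × Mat m n) : toF (-u) = -toF u := by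
  ext s; cases s with
  | inl p => rfl
  | inr p => rfl

lemma euclid_inner_eq {ι : Type} [Fintype ι] (x y : EuclideanSpace ℝ ι) :
    ⟪x, y⟫ = ∑ i, x i * y i := by
  simp [PiLp.inner_apply, RCLike.inner_apply, mul_comm]

lemma mInner_eq {m n : ℕ} (u v : Mat m n) : mInner u v = ⟪toE u, toE v⟫ := by
  rw [euclid_inner_eq, Fintype.sum_prod_type]
  rfl

lemma mNorm_eq {m n : ℕ} (u : Mat m n) : mNorm u = ‖toE u‖ := by
  rw [mNorm, mInner_eq, real_inner_self_eq_norm_sq]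
  exact Real.sqrt_sq (norm_nonneg _)

lemma pInner_eq {m n : ℕ} (u v : Mat m n × Mat m n) : pInner u v = ⟪toF u, toF v⟫ := by
  rw [euclid_inner_eq, Fintype.sum_sum_type, Fintype.sum_prod_type, Fintype.sum_prod_type]
  rfl

lemma pNorm_eq {m n : ℕ} (u : Mat m n × Mat m n) : pNorm u = ‖toF u‖ := by
  rw [pNorm, pInner_eq, real_inner_self_eq_norm_sq]
  exact Real.sqrt_sq (norm_nonneg _)

-- 2D triangle inequality for sqrt
lemma sqrt2_triangle (a b c d : ℝ) :
    Real.sqrt ((a+c)^2 + (b+d)^2) ≤ Real.sqrt (a^2+b^2) + Real.sqrt (c^2+d^2) := by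
  have h1 : (0:ℝ) ≤ a^2+b^2 := by positivity
  have h2 : (0:ℝ) ≤ c^2+d^2 := by positivity
  have hs1 := Real.sq_sqrt h1
  have hs2 := Real.sq_sqrt h2
  have hcs : a*c + b*d ≤ Real.sqrt (a^2+b^2) * Real.sqrt (c^2+d^2) := by
    rw [← Real.sqrt_mul h1]
    rcases le_or_gt (a*c + b*d) 0 with h|h
    · exact h.trans (Real.sqrt_nonneg _)
    · rw [show a*c+b*d = |a*c+b*d| from (abs_of_pos h).symm, ← Real.sqrt_sq_eq_abs]
      apply Real.sqrt_le_sqrt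
      nlinarith [sq_nonneg (a*d - b*c)]
  calc Real.sqrt ((a+c)^2 + (b+d)^2)
      ≤ Real.sqrt ((Real.sqrt (a^2+b^2) + Real.sqrt (c^2+d^2))^2) := by
        apply Real.sqrt_le_sqrt; nlinarith
    _ = Real.sqrt (a^2+b^2) + Real.sqrt (c^2+d^2) :=
        Real.sqrt_sq (by positivity)

lemma sqrt2_smul (t a b : ℝ) :
    Real.sqrt ((t*a)^2 + (t*b)^2) = |t| * Real.sqrt (a^2+b^2) := by
  rw [show (t*a)^2+(t*b)^2 = t^2*(a^2+b^2) by ring, Real.sqrt_mul (sq_nonneg t),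
    Real.sqrt_sq_eq_abs]

lemma le_of_le_add_t {X Y C : ℝ} (hC : 0 ≤ C)
    (h : ∀ t : ℝ, 0 < t → t ≤ 1 → X ≤ Y + t*C) : X ≤ Y := by
  by_contra hlt
  push_neg at hlt
  rcases eq_or_lt_of_le hC with h0|h0
  · have := h 1 one_pos le_rfl; rw [← h0] at this; linarith
  · have ht0 : 0 < min 1 ((X - Y)/(2*C)) := by
      exact lt_min one_pos (div_pos (by linarith) (by linarith))
    have ht1 : min 1 ((X - Y)/(2*C)) ≤ 1 := min_le_left _ _
    have := h _ ht0 ht1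
    have h2 : min 1 ((X - Y)/(2*C)) * C ≤ ((X - Y)/(2*C)) * C :=
      mul_le_mul_of_nonneg_right (min_le_right _ _) hC
    have h3 : ((X - Y)/(2*C)) * C = (X - Y)/2 := by field_simp
    linarith


lemma tv_convex {m n : ℕ} (a c : Mat m n × Mat m n) (t : ℝ) (h0 : 0 ≤ t) (h1 : t ≤ 1) :
    tvNorm (a + t • (c - a)) ≤ (1-t) * tvNorm a + t * tvNorm c := by
  have hpt : ∀ i j, Real.sqrt (((a + t • (c - a)).1 i j)^2 + ((a + t • (c - a)).2 i j)^2)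
      ≤ (1-t) * Real.sqrt ((a.1 i j)^2 + (a.2 i j)^2)
        + t * Real.sqrt ((c.1 i j)^2 + (c.2 i j)^2) := by
    intro i j
    have e1 : (a + t • (c - a)).1 i j = (1-t)*(a.1 i j) + t*(c.1 i j) := by
      show a.1 i j + t * (c.1 i j - a.1 i j) = _
      ring
    have e2 : (a + t • (c - a)).2 i j = (1-t)*(a.2 i j) + t*(c.2 i j) := by
      show a.2 i j + t * (c.2 i j - a.2 i j) = _
      ring
    rw [e1, e2]
    calc Real.sqrt (((1-t)*(a.1 i j) + t*(c.1 i j))^2 + ((1-t)*(a.2 i j) + t*(c.2 i j))^2)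
        ≤ Real.sqrt (((1-t)*(a.1 i j))^2 + ((1-t)*(a.2 i j))^2)
          + Real.sqrt ((t*(c.1 i j))^2 + (t*(c.2 i j))^2) := sqrt2_triangle _ _ _ _
      _ = (1-t) * Real.sqrt ((a.1 i j)^2 + (a.2 i j)^2)
          + t * Real.sqrt ((c.1 i j)^2 + (c.2 i j)^2) := by
          rw [sqrt2_smul, sqrt2_smul, abs_of_nonneg (by linarith : (0:ℝ) ≤ 1-t),
            abs_of_nonneg h0]
  calc tvNorm (a + t • (c - a))
      ≤ ∑ i, ∑ j, ((1-t) * Real.sqrt ((a.1 i j)^2 + (a.2 i j)^2)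
          + t * Real.sqrt ((c.1 i j)^2 + (c.2 i j)^2)) := by
        apply Finset.sum_le_sum
        intro i _
        apply Finset.sum_le_sum
        intro j _
        exact hpt i j
    _ = (1-t) * tvNorm a + t * tvNorm c := by
        rw [tvNorm, tvNorm, Finset.mul_sum, Finset.mul_sum, ← Finset.sum_add_distrib]
        refine Finset.sum_congr rfl fun i _ => ?_
        rw [Finset.mul_sum, Finset.mul_sum, ← Finset.sum_add_distrib]

lemma clamp_char {cinf csup t y : ℝ} (hy1 : cinf ≤ y) (hy2 : y ≤ csup) :
    (t - max cinf (min csup t)) * (y - max cinf (min csup t)) ≤ 0 := by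
  rcases le_total t cinf with h|h
  · have h2 : min csup t = t := min_eq_right (h.trans (hy1.trans hy2))
    rw [h2, max_eq_left h]
    nlinarith
  · rcases le_total t csup with h2|h2
    · rw [min_eq_right h2, max_eq_right h]
      simp
    · rw [min_eq_left h2, max_eq_right (hy1.trans hy2)]
      nlinarith

lemma coco_aux {τ0 fij M s t : ℝ} (hτ : 0 < τ0) (hfij : 0 < fij)
    (hM : τ0 * fij * Real.exp (-t) ≤ M) (hts : t ≤ s) :
    (τ0*(1 - fij*Real.exp (-s)) - τ0*(1 - fij*Real.exp (-t)))^2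
      ≤ M * ((τ0*(1 - fij*Real.exp (-s)) - τ0*(1 - fij*Real.exp (-t))) * (s - t)) := by
  set d := τ0*(1 - fij*Real.exp (-s)) - τ0*(1 - fij*Real.exp (-t)) with hd
  have hd2 : d = τ0*fij*(Real.exp (-t) - Real.exp (-s)) := by rw [hd]; ring
  have hexp : Real.exp (-t) * (1 - (s - t)) ≤ Real.exp (-s) := by
    have h1 := Real.add_one_le_exp (-(s-t))
    have h2 : Real.exp (-s) = Real.exp (-t) * Real.exp (-(s-t)) := by
      rw [← Real.exp_add]; ring_nf
    nlinarith [Real.exp_pos (-t)]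
  have hmono : Real.exp (-s) ≤ Real.exp (-t) := Real.exp_le_exp.mpr (by linarith)
  have hd0 : 0 ≤ d := by
    rw [hd2]
    apply mul_nonneg (by positivity) (by linarith)
  have hdle : d ≤ M * (s - t) := by
    rw [hd2]
    have h3 : Real.exp (-t) - Real.exp (-s) ≤ Real.exp (-t)*(s-t) := by nlinarith
    calc τ0*fij*(Real.exp (-t) - Real.exp (-s)) ≤ τ0*fij*(Real.exp (-t)*(s-t)) :=
          mul_le_mul_of_nonneg_left h3 (by positivity)
      _ = (τ0*fij*Real.exp (-t))*(s-t) := by ring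
      _ ≤ M*(s-t) := mul_le_mul_of_nonneg_right hM (by linarith)
  nlinarith [mul_le_mul_of_nonneg_left hdle hd0]

lemma euclid_eval_continuous {ι : Type} [Fintype ι] (p : ι) :
    Continuous (fun x : EuclideanSpace ℝ ι => x p) :=
  (continuous_apply p).comp (PiLp.continuous_ofLp 2 (fun _ : ι => ℝ))

lemma fromE_continuous {m n : ℕ} : Continuous (fromE (m := m) (n := n)) :=
  continuous_pi fun i => continuous_pi fun j => euclid_eval_continuous (i, j)

lemma toE_continuous {m n : ℕ} : Continuous (toE (m := m) (n := n)) := by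
  apply (PiLp.continuous_toLp 2 (fun _ : Fin m × Fin n => ℝ)).comp
  exact continuous_pi fun p => (continuous_apply p.2).comp (continuous_apply p.1)

-- bridge definitions
def boxSet (m n : ℕ) (cinf csup : ℝ) : Set (EuclideanSpace ℝ (Fin m × Fin n)) :=
  {x | ∀ p, cinf ≤ x p ∧ x p ≤ csup}

def Pbox (m n : ℕ) (cinf csup : ℝ) :
    EuclideanSpace ℝ (Fin m × Fin n) → EuclideanSpace ℝ (Fin m × Fin n) :=
  fun x => toE (boxProj cinf csup (fromE x))

def Amap (m n : ℕ) :
    EuclideanSpace ℝ (Fin m × Fin n) → EuclideanSpace ℝ ((Fin m × Fin n) ⊕ (Fin m × Fin n)) :=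
  fun x => toF (dgrad (fromE x))

def Bmap (m n : ℕ) (dv : Mat m n × Mat m n → Mat m n) :
    EuclideanSpace ℝ ((Fin m × Fin n) ⊕ (Fin m × Fin n)) → EuclideanSpace ℝ (Fin m × Fin n) :=
  fun q => toE (dv (fromF q))

def Gmap (m n : ℕ) (f : Mat m n) (τ0 : ℝ) :
    EuclideanSpace ℝ (Fin m × Fin n) → EuclideanSpace ℝ (Fin m × Fin n) :=
  fun x => toE (τ0 • gradD f (fromE x))

def tvF (m n : ℕ) : EuclideanSpace ℝ ((Fin m × Fin n) ⊕ (Fin m × Fin n)) → ℝ :=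
  fun q => tvNorm (fromF q)

lemma Amap_toE {m n : ℕ} (v : Mat m n) : Amap m n (toE v) = toF (dgrad v) := rfl
lemma Bmap_toF {m n : ℕ} (dv : Mat m n × Mat m n → Mat m n) (w : Mat m n × Mat m n) :
    Bmap m n dv (toF w) = toE (dv w) := by
  show toE (dv (fromF (toF w))) = toE (dv w)
  rw [fromF_toF]
lemma Gmap_toE {m n : ℕ} (f : Mat m n) (τ0 : ℝ) (v : Mat m n) :
    Gmap m n f τ0 (toE v) = toE (τ0 • gradD f v) := rfl
lemma Pbox_toE {m n : ℕ} (cinf csup : ℝ) (v : Mat m n) :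
    Pbox m n cinf csup (toE v) = toE (boxProj cinf csup v) := rfl
lemma tvF_toF {m n : ℕ} (x : Mat m n × Mat m n) : tvF m n (toF x) = tvNorm x := by
  show tvNorm (fromF (toF x)) = tvNorm x
  rw [fromF_toF]

lemma inBox_iff {m n : ℕ} (cinf csup : ℝ) (v : Mat m n) :
    inBox cinf csup v ↔ toE v ∈ boxSet m n cinf csup :=
  ⟨fun h p => h p.1 p.2, fun h i j => h (i, j)⟩

lemma boxSet_closed (m n : ℕ) (cinf csup : ℝ) : IsClosed (boxSet m n cinf csup) := by
  have h : boxSet m n cinf csup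
      = ⋂ p : Fin m × Fin n, ({x : EuclideanSpace ℝ (Fin m × Fin n) | cinf ≤ x p}
        ∩ {x | x p ≤ csup}) := by
    ext x
    simp [boxSet, Set.mem_iInter]
  rw [h]
  exact isClosed_iInter fun p =>
    (isClosed_le continuous_const (euclid_eval_continuous p)).inter
      (isClosed_le (euclid_eval_continuous p) continuous_const)

lemma Pbox_mem {m n : ℕ} {cinf csup : ℝ} (h : cinf ≤ csup)
    (v : EuclideanSpace ℝ (Fin m × Fin n)) : Pbox m n cinf csup v ∈ boxSet m n cinf csup :=
  fun _ => ⟨le_max_left _ _, max_le h (min_le_left _ _)⟩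

lemma Pbox_char {m n : ℕ} {cinf csup : ℝ}
    (v : EuclideanSpace ℝ (Fin m × Fin n)) (y : EuclideanSpace ℝ (Fin m × Fin n))
    (hy : y ∈ boxSet m n cinf csup) :
    ⟪v - Pbox m n cinf csup v, y - Pbox m n cinf csup v⟫ ≤ 0 := by
  rw [euclid_inner_eq]
  apply Finset.sum_nonpos
  intro p _
  exact clamp_char (hy p).1 (hy p).2

lemma tvF_continuous (m n : ℕ) : Continuous (tvF m n) := by
  show Continuous fun q : EuclideanSpace ℝ ((Fin m × Fin n) ⊕ (Fin m × Fin n)) =>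
    ∑ i, ∑ j, Real.sqrt ((q (Sum.inl (i, j)))^2 + (q (Sum.inr (i, j)))^2)
  apply continuous_finset_sum
  intro i _
  apply continuous_finset_sum
  intro j _
  apply Real.continuous_sqrt.comp
  exact ((euclid_eval_continuous (Sum.inl (i, j))).pow 2).add
    ((euclid_eval_continuous (Sum.inr (i, j))).pow 2)

lemma fromF_continuous {m n : ℕ} : Continuous (fromF (m := m) (n := n)) :=
  Continuous.prodMk
    (continuous_pi fun i => continuous_pi fun j => euclid_eval_continuous (Sum.inl (i, j)))
    (continuous_pi fun i => continuous_pi fun j => euclid_eval_continuous (Sum.inr (i, j)))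

lemma Gmap_continuous (m n : ℕ) (f : Mat m n) (τ0 : ℝ) : Continuous (Gmap m n f τ0) := by
  have h1 : Continuous fun u : Mat m n => τ0 • gradD f u := by
    apply continuous_pi
    intro i
    apply continuous_pi
    intro j
    show Continuous fun u : Mat m n => τ0 * (1 - f i j * Real.exp (-(u i j)))
    have h2 : Continuous fun u : Mat m n => u i j :=
      (continuous_apply j).comp (continuous_apply i)
    exact continuous_const.mul (continuous_const.sub (continuous_const.mul
      (Real.continuous_exp.comp h2.neg)))
  exact toE_continuous.comp (h1.comp fromE_continuous)

/-- Corollary 1: convergence of the PLAD method with box constraint to a point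
satisfying the first-order optimality conditions of
`min_{u ∈ U, z} { τ₀ D(u) + ‖z‖₁ : ∇u = z }`. -/
theorem plad_box_converges
    (m n : ℕ) (hm : 0 < m) (hn : 0 < n)
    (f : Mat m n) (hf : ∀ i j, 0 < f i j)
    -- `dv` is the negative adjoint of the discrete gradient
    (dv : Mat m n × Mat m n → Mat m n)
    (hadj : ∀ (u : Mat m n) (p : Mat m n × Mat m n), pInner (dgrad u) p = -mInner u (dv p))
    -- `Δnorm` is the operator norm of `u ↦ -div (∇ u)`
    (Δnorm : ℝ) (hΔ : ∀ u : Mat m n, mNorm (dv (dgrad u)) ≤ Δnorm * mNorm u)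
    (cinf csup : ℝ) (hbox : cinf < csup)
    (τ0 ρ : ℝ) (hτ0 : 0 < τ0) (hρ : 0 < ρ)
    -- step-size restriction with `L = (max_{i,j} f_{ij}) e^{-c_inf}`
    (L : ℝ) (hL : L = (⨆ i, ⨆ j, f i j) * Real.exp (-cinf))
    (δ : ℝ) (hδ0 : 0 < δ) (hδ : δ < 1 / (τ0 * L + ρ * Δnorm))
    -- the sequences of the algorithm
    (u : ℕ → Mat m n) (z b : ℕ → Mat m n × Mat m n)
    (hu : ∀ k, u (k + 1) = boxProj cinf csup
      (u k - δ • (τ0 • gradD f (u k) + ρ • dv (z k - dgrad (u k)) + dv (b k))))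
    (hz : ∀ k, ∀ w : Mat m n × Mat m n,
      tvNorm (z (k + 1)) + pInner (b k) (z (k + 1) - dgrad (u (k + 1)))
          + ρ / 2 * (pNorm (z (k + 1) - dgrad (u (k + 1)))) ^ 2
        ≤ tvNorm w + pInner (b k) (w - dgrad (u (k + 1)))
          + ρ / 2 * (pNorm (w - dgrad (u (k + 1)))) ^ 2)
    (hb : ∀ k, b (k + 1) = b k + ρ • (z (k + 1) - dgrad (u (k + 1))))
    -- first-order optimality conditions for `(ū, z̄, b̄)` with `ū ∈ U`
    (ubar : Mat m n) (zbar bbar : Mat m n × Mat m n)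
    (hubarU : inBox cinf csup ubar)
    (hopt1 : dgrad ubar = zbar)
    (hopt3 : IsSubgradTV (-bbar) zbar)
    (hopt2 : ∃ lbar : Mat m n, InNormalCone cinf csup ubar lbar ∧
      τ0 • gradD f ubar + dv bbar + lbar = 0) :
    ∃ (uinf : Mat m n) (zinf binf : Mat m n × Mat m n),
      Filter.Tendsto u Filter.atTop (nhds uinf) ∧
      Filter.Tendsto z Filter.atTop (nhds zinf) ∧
      Filter.Tendsto b Filter.atTop (nhds binf) ∧
      inBox cinf csup uinf ∧
      dgrad uinf = zinf ∧
      IsSubgradTV (-binf) zinf ∧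
      ∃ l : Mat m n, InNormalCone cinf csup uinf l ∧
        τ0 • gradD f uinf + dv binf + l = 0 := by
  classical
  -- positivity facts about the constants
  have i0 : Fin m := ⟨0, hm⟩
  have j0 : Fin n := ⟨0, hn⟩
  have hFle : ∀ i j, f i j ≤ ⨆ i', ⨆ j', f i' j' := by
    intro i j
    have h1 : f i j ≤ ⨆ j', f i j' :=
      le_ciSup (Set.Finite.bddAbove (Set.finite_range _)) j
    have h2 : (⨆ j', f i j') ≤ ⨆ i', ⨆ j', f i' j' :=
      le_ciSup (f := fun i' => ⨆ j', f i' j') (Set.Finite.bddAbove (Set.finite_range _)) i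
    exact h1.trans h2
  have hFpos : 0 < ⨆ i', ⨆ j', f i' j' := lt_of_lt_of_le (hf i0 j0) (hFle i0 j0)
  have hLpos : 0 < L := by rw [hL]; positivity
  have hL'pos : 0 < τ0 * L := mul_pos hτ0 hLpos
  have hΔ0 : 0 ≤ Δnorm := by
    have h1 := hΔ (fun _ _ => 1)
    have h2 : 0 < mNorm (fun _ _ => (1:ℝ) : Mat m n) := by
      rw [mNorm]
      apply Real.sqrt_pos.mpr
      rw [mInner]
      have hm' : (0:ℝ) < m := by exact_mod_cast hm
      have hn' : (0:ℝ) < n := by exact_mod_cast hn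
      simp only [mul_one]
      rw [Finset.sum_const, Finset.sum_const, Finset.card_univ, Finset.card_univ]
      simp [Fintype.card_fin]
      positivity
    have h3 : 0 ≤ mNorm (dv (dgrad (fun _ _ => 1 : Mat m n))) := Real.sqrt_nonneg _
    nlinarith
  have hSpos : 0 < τ0 * L + ρ * Δnorm := by nlinarith
  have hstepF : τ0 * L + ρ * Δnorm < 1/δ := by
    have h1 : δ * (τ0 * L + ρ * Δnorm) < 1 := (lt_div_iff₀ hSpos).mp hδ
    rw [lt_div_iff₀ hδ0]
    nlinarith
  -- transfer of hypotheses to Euclidean space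
  have hABf : ∀ x q, ⟪Amap m n x, q⟫ = -⟪x, Bmap m n dv q⟫ := by
    intro x q
    have h := hadj (fromE x) (fromF q)
    rw [pInner_eq, mInner_eq] at h
    rw [toF_fromF, toE_fromE] at h
    exact h
  have hΔf : ∀ x, ‖Bmap m n dv (Amap m n x)‖ ≤ Δnorm * ‖x‖ := by
    intro x
    have h := hΔ (fromE x)
    rw [mNorm_eq, mNorm_eq, toE_fromE] at h
    show ‖toE (dv (fromF (toF (dgrad (fromE x)))))‖ ≤ _
    rw [fromF_toF]
    exact h
  -- cocoercivity of G on the box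
  have hGcoF : ∀ x ∈ boxSet m n cinf csup, ∀ y ∈ boxSet m n cinf csup,
      ‖Gmap m n f τ0 x - Gmap m n f τ0 y‖^2
        ≤ (τ0 * L) * ⟪Gmap m n f τ0 x - Gmap m n f τ0 y, x - y⟫ := by
    intro x hx y hy
    have hnorm : ‖Gmap m n f τ0 x - Gmap m n f τ0 y‖^2
        = ∑ p, ((Gmap m n f τ0 x - Gmap m n f τ0 y) p)^2 := by
      rw [EuclideanSpace.norm_eq, Real.sq_sqrt (by positivity)]
      congr 1
      funext p
      rw [Real.norm_eq_abs, sq_abs]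
    rw [hnorm, euclid_inner_eq, Finset.mul_sum]
    apply Finset.sum_le_sum
    intro p _
    have hgoal : (Gmap m n f τ0 x - Gmap m n f τ0 y) p
        = τ0*(1 - f p.1 p.2 * Real.exp (-(x p))) - τ0*(1 - f p.1 p.2 * Real.exp (-(y p))) := rfl
    have hxyp : (x - y) p = x p - y p := rfl
    rw [hgoal, hxyp]
    have hexple : ∀ t : ℝ, cinf ≤ t → τ0 * f p.1 p.2 * Real.exp (-t) ≤ τ0 * L := by
      intro t ht
      rw [hL]
      have h1 : Real.exp (-t) ≤ Real.exp (-cinf) := Real.exp_le_exp.mpr (by linarith)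
      have h2 : f p.1 p.2 * Real.exp (-t) ≤ (⨆ i', ⨆ j', f i' j') * Real.exp (-cinf) := by
        apply mul_le_mul (hFle p.1 p.2) h1 (Real.exp_pos _).le hFpos.le
      calc τ0 * f p.1 p.2 * Real.exp (-t) = τ0 * (f p.1 p.2 * Real.exp (-t)) := by ring
        _ ≤ τ0 * ((⨆ i', ⨆ j', f i' j') * Real.exp (-cinf)) :=
            mul_le_mul_of_nonneg_left h2 hτ0.le
    rcases le_total (y p) (x p) with hc|hc
    · exact coco_aux hτ0 (hf p.1 p.2) (hexple (y p) (hy p).1) hc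
    · have h := coco_aux hτ0 (hf p.1 p.2) (hexple (x p) (hx p).1) hc
      nlinarith [h]
  -- iterates belong to the box
  have hUmemF : ∀ k, toE (u (k+1)) ∈ boxSet m n cinf csup := by
    intro k
    rw [hu k]
    intro p
    exact ⟨le_max_left _ _, max_le hbox.le (min_le_left _ _)⟩
  -- transfer of the u-update
  have huTF : ∀ k, toE (u (k+1+1)) = Pbox m n cinf csup (toE (u (k+1))
      - δ • (Gmap m n f τ0 (toE (u (k+1)))
        + ρ • Bmap m n dv (toF (z (k+1)) - Amap m n (toE (u (k+1))))
        + Bmap m n dv (toF (b (k+1))))) := by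
    intro k
    rw [Amap_toE, ← toF_sub, Bmap_toF, Bmap_toF, Gmap_toE, ← toE_smul, ← toE_add,
      ← toE_add, ← toE_smul, ← toE_sub, Pbox_toE]
    exact congrArg toE (hu (k+1))
  -- transfer of the b-update
  have hbTF : ∀ k, toF (b (k+1+1)) = toF (b (k+1))
      + ρ • (toF (z (k+1+1)) - Amap m n (toE (u (k+1+1)))) := by
    intro k
    rw [Amap_toE, ← toF_sub, ← toF_smul, ← toF_add]
    exact congrArg toF (hb (k+1))
  -- subgradient property of the z-update
  have hsubgF : ∀ k w', tvF m n (toF (z (k+1))) +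
      ⟪-(toF (b (k+1))), w' - toF (z (k+1))⟫ ≤ tvF m n w' := by
    intro k w'
    apply le_of_le_add_t (C := ρ/2 * ‖w' - toF (z (k+1))‖^2) (by positivity)
    intro t ht0 ht1
    have H := hz k (z (k+1) + t • (fromF w' - z (k+1)))
    rw [pInner_eq, pInner_eq, pNorm_eq, pNorm_eq, ← tvF_toF, ← tvF_toF] at H
    simp only [toF_sub, toF_add, toF_smul, toF_fromF] at H
    -- abbreviations
    have hbk1 : toF (b (k+1)) = toF (b k)
        + ρ • (toF (z (k+1)) - toF (dgrad (u (k+1)))) := by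
      rw [← toF_sub, ← toF_smul, ← toF_add]
      exact congrArg toF (hb k)
    have hconv : tvF m n (toF (z (k+1)) + t • (w' - toF (z (k+1))))
        ≤ (1-t) * tvF m n (toF (z (k+1))) + t * tvF m n w' := by
      have h := tv_convex (z (k+1)) (fromF w') t ht0.le ht1
      rw [← tvF_toF, ← tvF_toF, ← tvF_toF] at h
      simp only [toF_add, toF_smul, toF_sub, toF_fromF] at h
      exact h
    set Z := toF (z (k+1)) with hZ
    set D := toF (dgrad (u (k+1))) with hD
    set BK := toF (b k) with hBK
    have E0 : Z + t • (w' - Z) - D = (Z - D) + t • (w' - Z) := by abel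
    have E2 : ⟪BK, Z + t • (w' - Z) - D⟫ = ⟪BK, Z - D⟫ + t * ⟪BK, w' - Z⟫ := by
      rw [E0, inner_add_right, real_inner_smul_right]
    have E3 : ‖Z + t • (w' - Z) - D‖^2
        = ‖Z - D‖^2 + 2*(t*⟪Z - D, w' - Z⟫) + t^2*‖w' - Z‖^2 := by
      rw [E0, norm_add_sq_real, real_inner_smul_right, norm_smul,
        Real.norm_eq_abs, mul_pow, sq_abs]
    have E3ρ : ρ/2 * ‖Z + t • (w' - Z) - D‖^2
        = ρ/2 * (‖Z - D‖^2 + 2*(t*⟪Z - D, w' - Z⟫) + t^2*‖w' - Z‖^2) := by rw [E3]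
    have E1 : t * ⟪-(toF (b (k+1))), w' - Z⟫
        = t * (-⟪BK, w' - Z⟫ - ρ * ⟪Z - D, w' - Z⟫) := by
      rw [hbk1]
      rw [inner_neg_left, inner_add_left, real_inner_smul_left, inner_sub_left]
      ring
    have hts : t * (tvF m n Z + ⟪-(toF (b (k+1))), w' - Z⟫)
        ≤ t * (tvF m n w' + t * (ρ/2 * ‖w' - Z‖^2)) := by
      linarith [H, hconv, E2, E3ρ, E1]
    have := le_of_mul_le_mul_left hts ht0
    linarith
  -- saddle point data
  have hubarF : toE ubar ∈ boxSet m n cinf csup := (inBox_iff cinf csup ubar).mp hubarU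
  have hsubbarF : ∀ w', tvF m n (Amap m n (toE ubar))
      + ⟪-(toF bbar), w' - Amap m n (toE ubar)⟫ ≤ tvF m n w' := by
    intro w'
    rw [Amap_toE, hopt1]
    have h := hopt3 (fromF w')
    rw [pInner_eq] at h
    rw [toF_sub, toF_neg, toF_fromF] at h
    rw [← tvF_toF] at h
    calc tvF m n (toF zbar) + ⟪-(toF bbar), w' - toF zbar⟫ ≤ tvNorm (fromF w') := h
      _ = tvF m n w' := rfl
  have hstatF : ∀ y ∈ boxSet m n cinf csup,
      ⟪-(Gmap m n f τ0 (toE ubar) + Bmap m n dv (toF bbar)), y - toE ubar⟫ ≤ 0 := by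
    obtain ⟨lbar, hl1, hl2⟩ := hopt2
    intro y hy
    have hsum : τ0 • gradD f ubar + dv bbar = -lbar := by
      have := hl2
      linear_combination (norm := module) this
    have hGB : Gmap m n f τ0 (toE ubar) + Bmap m n dv (toF bbar)
        = toE (τ0 • gradD f ubar + dv bbar) := by
      rw [Gmap_toE, Bmap_toF, toE_add]
    rw [hGB, hsum, toE_neg, neg_neg]
    have h := hl1 (fromE y) ((inBox_iff cinf csup (fromE y)).mpr (by rwa [toE_fromE]))
    rw [mInner_eq, toE_sub, toE_fromE] at h
    exact h
  -- apply the abstract convergence theorem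
  obtain ⟨ui, zi, bi, hcu, hcz, hcb, hUi, hAzi, hsubi, hstati⟩ :=
    abstract_plad (boxSet m n cinf csup) (boxSet_closed m n cinf csup)
      (Pbox m n cinf csup) (fun v => Pbox_mem hbox.le v) (fun v y hy => Pbox_char v y hy)
      (tvF m n) (tvF_continuous m n)
      (Amap m n) (Bmap m n dv) hABf
      Δnorm hΔf
      (Gmap m n f τ0) (Gmap_continuous m n f τ0) (τ0 * L) hL'pos hGcoF
      ρ δ hρ hδ0 hstepF
      (fun k => toE (u (k+1))) (fun k => toF (z (k+1))) (fun k => toF (b (k+1)))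
      hUmemF huTF hsubgF hbTF
      (toE ubar) (toF bbar) hubarF hsubbarF hstatF
  -- repackage the conclusion
  refine ⟨fromE ui, fromF zi, fromF bi, ?_, ?_, ?_, ?_, ?_, ?_, ?_⟩
  · have h1 : Tendsto (fun k => u (k+1)) atTop (𝓝 (fromE ui)) := by
      have := (fromE_continuous.tendsto ui).comp hcu
      simpa [Function.comp_def, fromE_toE] using this
    exact (tendsto_add_atTop_iff_nat (f := u) 1).mp h1
  · have h1 : Tendsto (fun k => z (k+1)) atTop (𝓝 (fromF zi)) := by
      have := (fromF_continuous.tendsto zi).comp hcz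
      simpa [Function.comp_def, fromF_toF] using this
    exact (tendsto_add_atTop_iff_nat (f := z) 1).mp h1
  · have h1 : Tendsto (fun k => b (k+1)) atTop (𝓝 (fromF bi)) := by
      have := (fromF_continuous.tendsto bi).comp hcb
      simpa [Function.comp_def, fromF_toF] using this
    exact (tendsto_add_atTop_iff_nat (f := b) 1).mp h1
  · exact (inBox_iff cinf csup (fromE ui)).mpr (by rwa [toE_fromE])
  · have h1 : toF (dgrad (fromE ui)) = zi := hAzi
    have h2 := congrArg fromF h1
    rwa [fromF_toF] at h2
  · intro w
    have h := hsubi (toF w)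
    rw [tvF_toF] at h
    have heq : ⟪-bi, toF w - zi⟫ = pInner (-(fromF bi)) (w - fromF zi) := by
      rw [pInner_eq, toF_neg, toF_fromF, toF_sub, toF_fromF]
    rw [heq] at h
    exact h
  · refine ⟨-(τ0 • gradD f (fromE ui) + dv (fromF bi)), ?_, ?_⟩
    · intro y hy
      have h := hstati (toE y) ((inBox_iff cinf csup y).mp hy)
      have heq : toE (-(τ0 • gradD f (fromE ui) + dv (fromF bi)))
          = -(Gmap m n f τ0 ui + Bmap m n dv bi) := by
        rw [toE_neg, toE_add]
        rfl
      rw [mInner_eq, toE_sub, toE_fromE, heq]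
      exact h
    · abel
end
end
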